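/- arXiv:2212.09954 — 3 statements merged into one kernel-verified Lean document; each statement's English description precedes it below -/
import Mathlib

section
/- Let S be an invertible symmetric d×d real matrix, let G be a closed nonempty S-monotone set in ℝ^d, and assume D := int(dom ψ_G) ≠ ∅. Then: range(S^{-1}∇ψ_G) ⊂ G; dom P_G = dom ∂^S ψ_G = dom ∂̄^S ψ_G; ψ_G(x) = ψ_G*(Sx) = ½S(x,x) for every x ∈ G; and P_G(x) = ∂^S ψ_G(x) ∩ G for every x ∈ ℝ^d. -/
open Filter Topology Set Pointwise
open scoped RealInnerProductSpace

noncomputable section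

abbrev Euc (d : ℕ) := EuclideanSpace ℝ (Fin d)

/-- A proper lower-semicontinuous (closed) convex function with values in `ℝ ∪ {+∞}`. -/
def ClosedConvexFun {d : ℕ} (f : Euc d → EReal) : Prop :=
  LowerSemicontinuous f ∧ (∀ x, f x ≠ ⊥) ∧ (∃ x, f x ≠ ⊤) ∧
    ∀ x y : Euc d, ∀ a b : ℝ, 0 ≤ a → 0 ≤ b → a + b = 1 →
      f (a • x + b • y) ≤ (a : EReal) * f x + (b : EReal) * f y

/-- Subdifferential of an `EReal`-valued function. -/
def subdiff {d : ℕ} (f : Euc d → EReal) (x : Euc d) : Set (Euc d) :=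
  {y | ∀ z : Euc d, ((⟪z, y⟫ : ℝ) : EReal) + f x ≤ f (x + z)}

/-- Convex conjugate. -/
def fconj {d : ℕ} (f : Euc d → EReal) (y : Euc d) : EReal :=
  ⨆ x : Euc d, ((⟪x, y⟫ : ℝ) : EReal) - f x

/-- The function `f_A(x) = sup_{y ∈ A} (⟨x,y⟩ - f*(y))`. -/
def restrSup {d : ℕ} (f : Euc d → EReal) (A : Set (Euc d)) (x : Euc d) : EReal :=
  ⨆ y ∈ A, (((⟪x, y⟫ : ℝ) : EReal) - fconj f y)

/-- `Arg_A(x) = argmax_{y ∈ A} (⟨x,y⟩ - f*(y))`. -/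
def argMaxOn {d : ℕ} (f : Euc d → EReal) (A : Set (Euc d)) (x : Euc d) : Set (Euc d) :=
  {y ∈ A | ∀ z ∈ A, ((⟪x, z⟫ : ℝ) : EReal) - fconj f z ≤ ((⟪x, y⟫ : ℝ) : EReal) - fconj f y}

/-- Linear growth: `|g x| ≤ K (1 + |x|)`. -/
def LinGrowth {k : ℕ} (g : Euc k → ℝ) : Prop :=
  ∃ K > 0, ∀ x, |g x| ≤ K * (1 + ‖x‖)

/-- `x^{-j}`: delete the `j`-th coordinate. -/
def dropCoord {d : ℕ} (j : Fin (d + 1)) (x : Euc (d + 1)) : Euc d :=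
  WithLp.toLp 2 (fun i => x (j.succAbove i))

/-- The class `H^j_C`. -/
def MemH {d : ℕ} (j : Fin (d + 1)) (C : Set (Euc (d + 1))) (h : Euc (d + 1) → ℝ) : Prop :=
  ∃ g₁ g₂ : Euc d → ℝ, ConvexOn ℝ Set.univ g₁ ∧ ConvexOn ℝ Set.univ g₂ ∧
    LinGrowth g₁ ∧ LinGrowth g₂ ∧
    (∀ x : Euc (d + 1), h x = x j + g₁ (dropCoord j x) - g₂ (dropCoord j x)) ∧
    ∀ x : Euc (d + 1), DifferentiableAt ℝ g₁ (dropCoord j x) →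
      DifferentiableAt ℝ g₂ (dropCoord j x) → gradient h x ∈ C

/-- `θ^j(C) = {y / y^j : y ∈ C}`. -/
def theta {d : ℕ} (j : Fin d) (C : Set (Euc d)) : Set (Euc d) :=
  (fun y => (y j)⁻¹ • y) '' C

/-- `w` is a regular normal to `H` at `x`: `limsup_{H ∋ y → x} ⟨w, y-x⟩/|y-x| ≤ 0`. -/
def RegNormal {d : ℕ} (H : Set (Euc d)) (x w : Euc d) : Prop :=
  ∀ ε > 0, ∃ δ > 0, ∀ y ∈ H, y ≠ x → ‖y - x‖ < δ → ⟪w, y - x⟫ ≤ ε * ‖y - x‖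

/-- `w` is a normal vector to `H` at `x`. -/
def NormalVec {d : ℕ} (H : Set (Euc d)) (x w : Euc d) : Prop :=
  ∃ xs ws : ℕ → Euc d, (∀ n, xs n ∈ H ∧ RegNormal H (xs n) (ws n)) ∧
    Tendsto xs atTop (𝓝 x) ∧ Tendsto ws atTop (𝓝 w)

/-- Effective domain `{x | f x < ∞}`. -/
def effDom {d : ℕ} (f : Euc d → EReal) : Set (Euc d) := {x | f x ≠ ⊤}

/-- Real part of an `EReal`-valued function. -/
def toRealFun {d : ℕ} (f : Euc d → EReal) : Euc d → ℝ := fun x => (f x).toReal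

/-- Points of `int (dom f)` where `f` is differentiable. -/
def domGrad {d : ℕ} (f : Euc d → EReal) : Set (Euc d) :=
  {x | x ∈ interior (effDom f) ∧ DifferentiableAt ℝ (toRealFun f) x}

/-- `range ∇f`. -/
def gradRange {d : ℕ} (f : Euc d → EReal) : Set (Euc d) :=
  (fun x => gradient (toRealFun f) x) '' domGrad f

/-- Clarke-type subdifferential `∂̄f(x)`. -/
def clarke {d : ℕ} (f : Euc d → EReal) (x : Euc d) : Set (Euc d) :=
  closure (convexHull ℝ
    {v | ∃ xs : ℕ → Euc d, (∀ n, xs n ∈ domGrad f) ∧ Tendsto xs atTop (𝓝 x) ∧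
      Tendsto (fun n => gradient (toRealFun f) (xs n)) atTop (𝓝 v)})

/-- Singular set `Σ^j_A(Ψ)`. -/
def SigmaJ {d : ℕ} (Ψ : Euc d → Set (Euc d)) (j : Fin d) (A : Set (Euc d)) : Set (Euc d) :=
  {x | ∃ y₁ ∈ Ψ x ∩ A, ∃ y₂ ∈ Ψ x ∩ A, y₁ j ≠ y₂ j}

/-- The bilinear form `S(x,y) = ∑ x^i S^{ij} y^j`. -/
def Sbil {d : ℕ} (S : Matrix (Fin d) (Fin d) ℝ) (x y : Euc d) : ℝ :=
  ∑ i, ∑ k, x i * S i k * y k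

/-- Matrix acting on a vector. -/
def matVec {d : ℕ} (M : Matrix (Fin d) (Fin d) ℝ) (y : Euc d) : Euc d :=
  WithLp.toLp 2 (fun i => ∑ k, M i k * y k)

/-- Fitzpatrick function `ψ_G(x) = sup_{y ∈ G}(S(x,y) - S(y,y)/2)`. -/
def fitz {d : ℕ} (S : Matrix (Fin d) (Fin d) ℝ) (G : Set (Euc d)) (x : Euc d) : EReal :=
  ⨆ y ∈ G, ((Sbil S x y - Sbil S y y / 2 : ℝ) : EReal)

/-- `S`-monotone set. -/
def SMonotone {d : ℕ} (S : Matrix (Fin d) (Fin d) ℝ) (G : Set (Euc d)) : Prop :=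
  ∀ x ∈ G, ∀ y ∈ G, 0 ≤ Sbil S (x - y) (x - y)

/-- Projection `P_G(x) = argmin_{y ∈ G} S(x-y, x-y)`. -/
def proj {d : ℕ} (S : Matrix (Fin d) (Fin d) ℝ) (G : Set (Euc d)) (x : Euc d) : Set (Euc d) :=
  {y ∈ G | ∀ z ∈ G, Sbil S (x - y) (x - y) ≤ Sbil S (x - z) (x - z)}

/-- `S`-regular normal vector. -/
def SRegNormal {d : ℕ} (S : Matrix (Fin d) (Fin d) ℝ) (H : Set (Euc d)) (x w : Euc d) : Prop :=
  ∀ ε > 0, ∃ δ > 0, ∀ y ∈ H, y ≠ x → ‖y - x‖ < δ → Sbil S w (y - x) ≤ ε * ‖y - x‖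

/-- `S`-normal vector. -/
def SNormal {d : ℕ} (S : Matrix (Fin d) (Fin d) ℝ) (H : Set (Euc d)) (x w : Euc d) : Prop :=
  ∃ xs ws : ℕ → Euc d, (∀ n, xs n ∈ H ∧ SRegNormal S H (xs n) (ws n)) ∧
    Tendsto xs atTop (𝓝 x) ∧ Tendsto ws atTop (𝓝 w)

/-- First-order singular set `Σ₁^j(P_G)`. -/
def Sigma1J {d : ℕ} (S : Matrix (Fin d) (Fin d) ℝ) (G : Set (Euc d)) (j : Fin d) :
    Set (Euc d) :=
  {x | ∃ y₁ ∈ proj S G x, ∃ y₂ ∈ proj S G x,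
    0 < Sbil S (y₁ - y₂) (y₁ - y₂) ∧ y₁ j ≠ y₂ j}

/-- Zero-order singular set `Σ̄₀^j(P_G)`. -/
def Sigma0J {d : ℕ} (S : Matrix (Fin d) (Fin d) ℝ) (G : Set (Euc d)) (j : Fin d) :
    Set (Euc d) :=
  {x | ∃ y₁ ∈ proj S G x, ∃ y₂ ∈ proj S G x,
    Sbil S (y₁ - y₂) (y₁ - y₂) = 0 ∧ y₁ j ≠ y₂ j}

/-- The canonical bilinear form of index `m` on `ℝ^m × ℝ^k`. -/
def Lam {m k : ℕ} (p q : Euc m × Euc k) : ℝ := ⟪p.1, q.1⟫ - ⟪p.2, q.2⟫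

namespace Stmt12Aux

open Metric

variable {d : ℕ}

/-- `matVec M` as a linear map. -/
def mvLin (M : Matrix (Fin d) (Fin d) ℝ) : Euc d →ₗ[ℝ] Euc d where
  toFun := matVec M
  map_add' y z := by
    ext i
    simp only [matVec, PiLp.add_apply, PiLp.toLp_apply, mul_add]
    exact Finset.sum_add_distrib
  map_smul' a y := by
    ext i
    simp only [matVec, PiLp.smul_apply, PiLp.toLp_apply, smul_eq_mul, RingHom.id_apply, Finset.mul_sum]
    exact Finset.sum_congr rfl fun k _ => by ring

/-- `matVec M` as a continuous linear map. -/
def mvCLM (M : Matrix (Fin d) (Fin d) ℝ) : Euc d →L[ℝ] Euc d :=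
  LinearMap.toContinuousLinearMap (mvLin M)

lemma mvCLM_apply (M : Matrix (Fin d) (Fin d) ℝ) (y : Euc d) : mvCLM M y = matVec M y := rfl

lemma matVec_matVec (M N : Matrix (Fin d) (Fin d) ℝ) (y : Euc d) :
    matVec M (matVec N y) = matVec (M * N) y := by
  ext i
  simp only [matVec, PiLp.toLp_apply, Matrix.mul_apply, Finset.sum_mul, Finset.mul_sum]
  rw [Finset.sum_comm]
  exact Finset.sum_congr rfl fun k _ => Finset.sum_congr rfl fun j _ => by ring

lemma matVec_one (y : Euc d) : matVec (1 : Matrix (Fin d) (Fin d) ℝ) y = y := by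
  ext i
  simp [matVec, Matrix.one_apply]

lemma matVec_inv_matVec {S : Matrix (Fin d) (Fin d) ℝ} (hinv : IsUnit S.det) (y : Euc d) :
    matVec S⁻¹ (matVec S y) = y := by
  rw [matVec_matVec, Matrix.nonsing_inv_mul S hinv, matVec_one]

lemma sbil_eq_inner (S : Matrix (Fin d) (Fin d) ℝ) (x y : Euc d) :
    Sbil S x y = ⟪x, matVec S y⟫ := by
  simp only [Sbil, matVec, PiLp.toLp_apply, PiLp.inner_apply, RCLike.inner_apply, starRingEnd_apply,
    star_trivial, Finset.mul_sum, Finset.sum_mul]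
  exact Finset.sum_congr rfl fun i _ => Finset.sum_congr rfl fun k _ => by ring

lemma sbil_symm {S : Matrix (Fin d) (Fin d) ℝ} (hs : S.IsSymm) (x y : Euc d) :
    Sbil S x y = Sbil S y x := by
  rw [Sbil, Sbil, Finset.sum_comm]
  refine Finset.sum_congr rfl fun k _ => Finset.sum_congr rfl fun i _ => ?_
  rw [← hs.apply k i]
  ring

lemma sbil_add_left (S : Matrix (Fin d) (Fin d) ℝ) (x z y : Euc d) :
    Sbil S (x + z) y = Sbil S x y + Sbil S z y := by
  simp only [sbil_eq_inner]
  exact inner_add_left _ _ _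

lemma sbil_sub_sub {S : Matrix (Fin d) (Fin d) ℝ} (hs : S.IsSymm) (x y : Euc d) :
    Sbil S (x - y) (x - y) = Sbil S x x - 2 * (Sbil S x y - Sbil S y y / 2) := by
  have hsub : matVec S (x - y) = matVec S x - matVec S y := map_sub (mvLin S) x y
  have hyx : Sbil S y x = Sbil S x y := sbil_symm hs y x
  simp only [sbil_eq_inner] at hyx ⊢
  rw [hsub, inner_sub_left, inner_sub_right, inner_sub_right, ← hyx]
  ring


/-- The affine function whose sup defines `fitz`. -/
def ell (S : Matrix (Fin d) (Fin d) ℝ) (y x : Euc d) : ℝ := Sbil S x y - Sbil S y y / 2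

lemma fitz_eq_sup (S : Matrix (Fin d) (Fin d) ℝ) (G : Set (Euc d)) (x : Euc d) :
    fitz S G x = ⨆ y ∈ G, ((ell S y x : ℝ) : EReal) := rfl

lemma le_fitz {S : Matrix (Fin d) (Fin d) ℝ} {G : Set (Euc d)} {y : Euc d} (hy : y ∈ G)
    (x : Euc d) : ((ell S y x : ℝ) : EReal) ≤ fitz S G x := by
  rw [fitz_eq_sup]
  exact le_iSup₂ (f := fun y (_ : y ∈ G) => ((ell S y x : ℝ) : EReal)) y hy

lemma fitz_le {S : Matrix (Fin d) (Fin d) ℝ} {G : Set (Euc d)} {x : Euc d} {c : EReal}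
    (h : ∀ y ∈ G, ((ell S y x : ℝ) : EReal) ≤ c) : fitz S G x ≤ c :=
  iSup₂_le h

lemma fitz_ne_bot {S : Matrix (Fin d) (Fin d) ℝ} {G : Set (Euc d)} (hGne : G.Nonempty)
    (x : Euc d) : fitz S G x ≠ ⊥ := by
  obtain ⟨y₀, hy₀⟩ := hGne
  exact fun h => by simpa [h] using le_fitz (S := S) hy₀ x

/-- On `G` the Fitzpatrick function equals `½ S(x,x)`. -/
lemma fitz_on_G {S : Matrix (Fin d) (Fin d) ℝ} {G : Set (Euc d)} (hs : S.IsSymm)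
    (hmono : SMonotone S G) {x : Euc d} (hx : x ∈ G) :
    fitz S G x = ((Sbil S x x / 2 : ℝ) : EReal) := by
  refine le_antisymm (fitz_le fun y hy => ?_) ?_
  · rw [EReal.coe_le_coe_iff]
    have h := hmono x hx y hy
    rw [sbil_sub_sub hs] at h
    simp only [ell]
    linarith
  · have he : ell S x x = Sbil S x x / 2 := by unfold ell; ring
    rw [← he]
    exact le_fitz hx x

lemma effDom_of_mem_G {S : Matrix (Fin d) (Fin d) ℝ} {G : Set (Euc d)} (hs : S.IsSymm)
    (hmono : SMonotone S G) {x : Euc d} (hx : x ∈ G) : x ∈ effDom (fitz S G) := by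
  simp only [effDom, Set.mem_setOf_eq, fitz_on_G hs hmono hx]
  exact EReal.coe_ne_top _

/-- Real form of the Fitzpatrick value on the effective domain. -/
lemma fitz_eq_coe {S : Matrix (Fin d) (Fin d) ℝ} {G : Set (Euc d)} (hGne : G.Nonempty)
    {x : Euc d} (hx : x ∈ effDom (fitz S G)) :
    fitz S G x = ((toRealFun (fitz S G) x : ℝ) : EReal) :=
  (EReal.coe_toReal hx (fitz_ne_bot hGne x)).symm

lemma ell_le_toReal {S : Matrix (Fin d) (Fin d) ℝ} {G : Set (Euc d)} (hGne : G.Nonempty)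
    {x : Euc d} (hx : x ∈ effDom (fitz S G)) {y : Euc d} (hy : y ∈ G) :
    ell S y x ≤ toRealFun (fitz S G) x := by
  have := le_fitz (S := S) hy x
  rw [fitz_eq_coe hGne hx] at this
  exact_mod_cast this

lemma exists_ell_close {S : Matrix (Fin d) (Fin d) ℝ} {G : Set (Euc d)} (hGne : G.Nonempty)
    {x : Euc d} (hx : x ∈ effDom (fitz S G)) {ε : ℝ} (hε : 0 < ε) :
    ∃ y ∈ G, toRealFun (fitz S G) x - ε < ell S y x := by
  set c := toRealFun (fitz S G) x
  have hlt : ((c - ε : ℝ) : EReal) < fitz S G x := by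
    rw [fitz_eq_coe hGne hx]
    exact_mod_cast sub_lt_self c hε
  rw [fitz_eq_sup] at hlt
  obtain ⟨y, hy⟩ := lt_iSup_iff.1 hlt
  obtain ⟨hyG, hy'⟩ := lt_iSup_iff.1 hy
  exact ⟨y, hyG, by exact_mod_cast hy'⟩

/-- `ℓ_y(x + z) = ℓ_y(x) + ⟨z, Sy⟩`. -/
lemma ell_add (S : Matrix (Fin d) (Fin d) ℝ) (y x z : Euc d) :
    ell S y (x + z) = ell S y x + ⟪z, matVec S y⟫ := by
  simp only [ell, sbil_add_left, sbil_eq_inner, inner_add_left]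
  ring

/-- Membership in `proj` as an argmax property of `ℓ`. -/
lemma mem_proj_iff {S : Matrix (Fin d) (Fin d) ℝ} (hs : S.IsSymm) {G : Set (Euc d)}
    {x y : Euc d} :
    y ∈ proj S G x ↔ y ∈ G ∧ ∀ z ∈ G, ell S z x ≤ ell S y x := by
  unfold proj
  simp only [Set.mem_setOf_eq, Set.mem_sep_iff]
  refine and_congr_right fun _ => forall₂_congr fun z _ => ?_
  rw [sbil_sub_sub hs, sbil_sub_sub hs]
  constructor
  · intro h
    simp only [ell]
    linarith
  · intro h
    simp only [ell] at h
    linarith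

/-- `y ∈ proj S G x` iff `y ∈ G` and `y` attains the defining sup of `fitz`. -/
lemma mem_proj_iff_attains {S : Matrix (Fin d) (Fin d) ℝ} (hs : S.IsSymm) {G : Set (Euc d)}
    (hGne : G.Nonempty) {x y : Euc d} :
    y ∈ proj S G x ↔ y ∈ G ∧ fitz S G x = ((ell S y x : ℝ) : EReal) := by
  rw [mem_proj_iff hs]
  refine and_congr_right fun hyG => ⟨fun h => le_antisymm (fitz_le fun z hz => ?_)
    (le_fitz hyG x), fun h z hz => ?_⟩
  · exact_mod_cast h z hz
  · have := le_fitz (S := S) hz x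
    rw [h] at this
    exact_mod_cast this

/-- If `y ∈ G` attains the sup then `Sy` is a subgradient at `x`. -/
lemma attain_mem_subdiff {S : Matrix (Fin d) (Fin d) ℝ} {G : Set (Euc d)}
    {x y : Euc d} (hyG : y ∈ G) (hatt : fitz S G x = ((ell S y x : ℝ) : EReal)) :
    matVec S y ∈ subdiff (fitz S G) x := by
  intro z
  have he : ell S y (x + z) = ⟪z, matVec S y⟫ + ell S y x := by rw [ell_add]; ring
  rw [hatt, ← EReal.coe_add, ← he]
  exact le_fitz hyG (x + z)

lemma subdiff_ne_top {S : Matrix (Fin d) (Fin d) ℝ} {G : Set (Euc d)} (hs : S.IsSymm)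
    (hmono : SMonotone S G) {y₀ : Euc d} (hy₀ : y₀ ∈ G) {x w : Euc d}
    (hw : w ∈ subdiff (fitz S G) x) : x ∈ effDom (fitz S G) := by
  simp only [effDom, Set.mem_setOf_eq]
  intro htop
  have h := hw (y₀ - x)
  rw [htop] at h
  have : ((⟪y₀ - x, w⟫ : ℝ) : EReal) + ⊤ = ⊤ := by
    rw [EReal.add_top_iff_ne_bot]
    exact EReal.coe_ne_bot _
  rw [this, top_le_iff] at h
  have := effDom_of_mem_G hs hmono hy₀
  simp only [effDom, Set.mem_setOf_eq] at this
  rw [add_sub_cancel] at h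
  exact this h

lemma matVec_matVec_inv {S : Matrix (Fin d) (Fin d) ℝ} (hinv : IsUnit S.det) (w : Euc d) :
    matVec S (matVec S⁻¹ w) = w := by
  rw [matVec_matVec, Matrix.mul_nonsing_inv S hinv, matVec_one]

/-- Part (e): `P_G(x) = S⁻¹∂ψ(x) ∩ G`. -/
lemma proj_eq_subdiff_inter {S : Matrix (Fin d) (Fin d) ℝ} (hs : S.IsSymm)
    (hinv : IsUnit S.det) {G : Set (Euc d)} (hGne : G.Nonempty) (hmono : SMonotone S G)
    (x : Euc d) : proj S G x = (matVec S⁻¹ '' subdiff (fitz S G) x) ∩ G := by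
  ext y
  constructor
  · intro hy
    obtain ⟨hyG, hatt⟩ := (mem_proj_iff_attains hs hGne).1 hy
    exact ⟨⟨matVec S y, attain_mem_subdiff hyG hatt, matVec_inv_matVec hinv y⟩, hyG⟩
  · rintro ⟨⟨w, hw, rfl⟩, hyG⟩
    set y := matVec S⁻¹ w with hy
    have hwy : w = matVec S y := (matVec_matVec_inv hinv w).symm
    obtain ⟨y₀, hy₀⟩ := id hGne
    have hxdom : x ∈ effDom (fitz S G) := subdiff_ne_top hs hmono hy₀ hw
    set c := toRealFun (fitz S G) x with hc
    have hfx : fitz S G x = ((c : ℝ) : EReal) := fitz_eq_coe hGne hxdom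
    have hsub := hw (y - x)
    rw [hfx, add_sub_cancel, fitz_on_G hs hmono hyG, ← EReal.coe_add,
      EReal.coe_le_coe_iff] at hsub
    have hinner : ⟪y - x, w⟫ = Sbil S y y - Sbil S x y := by
      rw [hwy, inner_sub_left, ← sbil_eq_inner S y y, ← sbil_eq_inner S x y]
    have h1 : c ≤ ell S y x := by
      simp only [ell]
      rw [hinner] at hsub
      linarith
    have h2 : ell S y x ≤ c := ell_le_toReal hGne hxdom hyG
    refine (mem_proj_iff_attains hs hGne).2 ⟨hyG, ?_⟩
    rw [hfx]
    exact_mod_cast congrArg (fun t => ((t : ℝ) : EReal)) (le_antisymm h2 h1).symm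

/-- Part (d). -/
lemma fitz_eq_fconj {S : Matrix (Fin d) (Fin d) ℝ} (hs : S.IsSymm) {G : Set (Euc d)}
    (hGne : G.Nonempty) (hmono : SMonotone S G) {x : Euc d} (hx : x ∈ G) :
    fitz S G x = fconj (fitz S G) (matVec S x) := by
  rw [fitz_on_G hs hmono hx]
  refine le_antisymm ?_ (iSup_le fun z => ?_)
  · have hxx : ((⟪x, matVec S x⟫ : ℝ) : EReal) - fitz S G x
        = ((Sbil S x x / 2 : ℝ) : EReal) := by
      rw [fitz_on_G hs hmono hx, ← sbil_eq_inner, ← EReal.coe_sub]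
      exact EReal.coe_eq_coe_iff.2 (by ring)
    rw [← hxx]
    exact le_iSup (fun z => ((⟪z, matVec S x⟫ : ℝ) : EReal) - fitz S G z) x
  · by_cases hz : fitz S G z = ⊤
    · rw [hz, EReal.sub_top]
      exact bot_le
    · have hzdom : z ∈ effDom (fitz S G) := hz
      have hzc := fitz_eq_coe hGne hzdom
      rw [hzc, ← EReal.coe_sub, EReal.coe_le_coe_iff]
      have h := ell_le_toReal hGne hzdom hx
      simp only [ell] at h
      rw [← sbil_eq_inner]
      have : Sbil S z x = Sbil S x z := sbil_symm hs z x
      linarith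

lemma ell_combo (S : Matrix (Fin d) (Fin d) ℝ) (y x₁ x₂ : Euc d) {a b : ℝ} (hab : a + b = 1) :
    ell S y (a • x₁ + b • x₂) = a * ell S y x₁ + b * ell S y x₂ := by
  have hb : b = 1 - a := by linarith
  subst hb
  simp only [ell, sbil_eq_inner, inner_add_left, real_inner_smul_left]
  ring

lemma combo_effDom {S : Matrix (Fin d) (Fin d) ℝ} {G : Set (Euc d)} (hGne : G.Nonempty)
    {x₁ x₂ : Euc d} (h₁ : x₁ ∈ effDom (fitz S G)) (h₂ : x₂ ∈ effDom (fitz S G))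
    {a b : ℝ} (ha : 0 ≤ a) (hb : 0 ≤ b) (hab : a + b = 1) :
    a • x₁ + b • x₂ ∈ effDom (fitz S G) ∧
      toRealFun (fitz S G) (a • x₁ + b • x₂)
        ≤ a * toRealFun (fitz S G) x₁ + b * toRealFun (fitz S G) x₂ := by
  set c := a * toRealFun (fitz S G) x₁ + b * toRealFun (fitz S G) x₂ with hc
  have hle : fitz S G (a • x₁ + b • x₂) ≤ ((c : ℝ) : EReal) := by
    refine fitz_le fun y hy => ?_
    rw [EReal.coe_le_coe_iff, ell_combo S y x₁ x₂ hab]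
    exact add_le_add (mul_le_mul_of_nonneg_left (ell_le_toReal hGne h₁ hy) ha)
      (mul_le_mul_of_nonneg_left (ell_le_toReal hGne h₂ hy) hb)
  have hdom : a • x₁ + b • x₂ ∈ effDom (fitz S G) :=
    fun htop => by rw [htop] at hle; exact (EReal.coe_lt_top c).not_ge hle
  refine ⟨hdom, ?_⟩
  rw [fitz_eq_coe hGne hdom, EReal.coe_le_coe_iff] at hle
  exact hle

lemma effDom_convex {S : Matrix (Fin d) (Fin d) ℝ} {G : Set (Euc d)} (hGne : G.Nonempty) :
    Convex ℝ (effDom (fitz S G)) :=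
  fun _ h₁ _ h₂ _ _ ha hb hab => (combo_effDom hGne h₁ h₂ ha hb hab).1

lemma f_convexOn {S : Matrix (Fin d) (Fin d) ℝ} {G : Set (Euc d)} (hGne : G.Nonempty) :
    ConvexOn ℝ (effDom (fitz S G)) (toRealFun (fitz S G)) :=
  ⟨effDom_convex hGne, fun _ h₁ _ h₂ _ _ ha hb hab => (combo_effDom hGne h₁ h₂ ha hb hab).2⟩

lemma f_continuousOn {S : Matrix (Fin d) (Fin d) ℝ} {G : Set (Euc d)} (hGne : G.Nonempty) :
    ContinuousOn (toRealFun (fitz S G)) (interior (effDom (fitz S G))) :=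
  (f_convexOn hGne).continuousOn_interior

/-- Local upper bound for `f` near an interior point of the domain. -/
lemma exists_local_bound {S : Matrix (Fin d) (Fin d) ℝ} {G : Set (Euc d)} (hGne : G.Nonempty)
    {x : Euc d} (hx : x ∈ interior (effDom (fitz S G))) :
    ∃ r > 0, ∃ M : ℝ, Metric.closedBall x r ⊆ interior (effDom (fitz S G)) ∧
      ∀ u ∈ Metric.closedBall x r, toRealFun (fitz S G) u ≤ M := by
  obtain ⟨r, hr, hball⟩ := Metric.isOpen_iff.1 isOpen_interior x hx
  have hcb : Metric.closedBall x (r / 2) ⊆ interior (effDom (fitz S G)) :=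
    (Metric.closedBall_subset_ball (by linarith)).trans hball
  obtain ⟨M, hM⟩ := (isCompact_closedBall x (r / 2)).exists_bound_of_continuousOn
    ((f_continuousOn hGne).mono hcb)
  exact ⟨r / 2, by linarith, M, hcb, fun u hu => (le_abs_self _).trans
    (by simpa [Real.norm_eq_abs] using hM u hu)⟩

/-- The directional-derivative inequality for a convex function at a differentiability point. -/
lemma grad_subgrad_real {S : Matrix (Fin d) (Fin d) ℝ} {G : Set (Euc d)} (hGne : G.Nonempty)
    {u : Euc d} (hu : u ∈ interior (effDom (fitz S G)))
    (hdiff : DifferentiableAt ℝ (toRealFun (fitz S G)) u)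
    {p : Euc d} (hp : p ∈ effDom (fitz S G)) :
    ⟪p - u, gradient (toRealFun (fitz S G)) u⟫
      ≤ toRealFun (fitz S G) p - toRealFun (fitz S G) u := by
  set f := toRealFun (fitz S G) with hf
  set z := p - u with hz
  set w := gradient f u with hwdef
  have hF : HasFDerivAt f ((InnerProductSpace.toDual ℝ (Euc d)) w) u :=
    hasGradientAt_iff_hasFDerivAt.1 hdiff.hasGradientAt
  have hc : HasDerivAt (fun t : ℝ => u + t • z) z 0 := by
    simpa using ((hasDerivAt_id (0 : ℝ)).smul_const z).const_add u
  have hg : HasDerivAt (fun t : ℝ => f (u + t • z)) ⟪w, z⟫ 0 := by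
    have h0 : HasFDerivAt f ((InnerProductSpace.toDual ℝ (Euc d)) w) (u + (0 : ℝ) • z) := by
      simpa using hF
    have h1 := h0.comp_hasDerivAt (0 : ℝ) hc
    simp only [InnerProductSpace.toDual_apply_apply] at h1
    exact h1
  set g := fun t : ℝ => f (u + t • z) with hgdef
  have hslope : Tendsto (slope g 0) (𝓝[>] 0) (𝓝 ⟪w, z⟫) :=
    (hasDerivAt_iff_tendsto_slope.1 hg).mono_left
      (nhdsWithin_mono 0 fun t ht => ne_of_gt ht)
  have hbound : ∀ᶠ t in 𝓝[>] (0 : ℝ), slope g 0 t ≤ f p - f u := by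
    filter_upwards [Ioc_mem_nhdsGT_of_mem (Set.mem_Ico.2 ⟨le_refl (0:ℝ), one_pos⟩)]
      with t ht
    obtain ⟨ht0, ht1⟩ := ht
    have hcombo : u + t • z = (1 - t) • u + t • p := by
      simp only [hz, smul_sub]
      module
    have hconv := (f_convexOn (S := S) hGne).2 (interior_subset hu) hp
      (by linarith : (0:ℝ) ≤ 1 - t) ht0.le (by ring)
    rw [← hcombo] at hconv
    simp only [smul_eq_mul] at hconv
    rw [slope_def_field, hgdef]
    simp only [zero_smul, add_zero, sub_zero]
    rw [div_le_iff₀ ht0]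
    calc f (u + t • z) - f u ≤ (1 - t) * f u + t * f p - f u := by linarith
    _ = (f p - f u) * t := by ring
  have hfin : ⟪w, z⟫ ≤ f p - f u := le_of_tendsto hslope hbound
  rw [real_inner_comm] at hfin
  exact hfin

/-- The gradient at a differentiability point is a subgradient. -/
lemma grad_mem_subdiff {S : Matrix (Fin d) (Fin d) ℝ} {G : Set (Euc d)} (hGne : G.Nonempty)
    {u : Euc d} (hu : u ∈ interior (effDom (fitz S G)))
    (hdiff : DifferentiableAt ℝ (toRealFun (fitz S G)) u) :
    gradient (toRealFun (fitz S G)) u ∈ subdiff (fitz S G) u := by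
  intro z
  by_cases hp : u + z ∈ effDom (fitz S G)
  · have h := grad_subgrad_real hGne hu hdiff hp
    rw [add_sub_cancel_left] at h
    rw [fitz_eq_coe hGne (interior_subset hu), fitz_eq_coe hGne hp, ← EReal.coe_add,
      EReal.coe_le_coe_iff]
    linarith
  · have : fitz S G (u + z) = ⊤ := by
      by_contra h
      exact hp h
    rw [this]
    exact le_top

/-- Subgradients are unique at interior differentiability points. -/
lemma subdiff_unique {S : Matrix (Fin d) (Fin d) ℝ} {G : Set (Euc d)} (hGne : G.Nonempty)
    {x : Euc d} (hx : x ∈ interior (effDom (fitz S G)))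
    (hdiff : DifferentiableAt ℝ (toRealFun (fitz S G)) x)
    {w : Euc d} (hw : w ∈ subdiff (fitz S G) x) :
    w = gradient (toRealFun (fitz S G)) x := by
  set f := toRealFun (fitz S G) with hf
  set v := gradient f x with hv
  by_contra hne
  set h := w - v with hh
  have hh0 : h ≠ 0 := sub_ne_zero.2 hne
  have hlo : (fun x' => f x' - f x - ⟪v, x' - x⟫) =o[𝓝 x] fun x' => x' - x :=
    hasGradientAt_iff_isLittleO.1 hdiff.hasGradientAt
  have hn : 0 < ‖h‖ := norm_pos_iff.2 hh0
  have hev := hlo.def (by linarith : (0:ℝ) < ‖h‖ / 2)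
  have hevD : ∀ᶠ x' in 𝓝 x, x' ∈ effDom (fitz S G) :=
    mem_of_superset (isOpen_interior.mem_nhds hx) interior_subset
  have hkey : ∀ᶠ x' in 𝓝 x, ⟪x' - x, h⟫ ≤ ‖h‖ / 2 * ‖x' - x‖ := by
    filter_upwards [hev, hevD] with x' h1 h2
    have hsub := hw (x' - x)
    rw [add_sub_cancel] at hsub
    rw [fitz_eq_coe hGne (interior_subset hx), fitz_eq_coe hGne h2, ← EReal.coe_add,
      EReal.coe_le_coe_iff] at hsub
    have h1' : f x' - f x - ⟪v, x' - x⟫ ≤ ‖h‖ / 2 * ‖x' - x‖ :=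
      (le_abs_self _).trans (by rwa [Real.norm_eq_abs] at h1)
    have hcomm : ⟪v, x' - x⟫ = ⟪x' - x, v⟫ := real_inner_comm _ _
    have hIs : ⟪x' - x, h⟫ = ⟪x' - x, w⟫ - ⟪x' - x, v⟫ := inner_sub_right _ _ _
    rw [hIs]
    linarith
  obtain ⟨δ, hδ, hball⟩ := Metric.eventually_nhds_iff_ball.1 hkey
  set t := δ / (‖h‖ + 1) with ht
  have ht0 : 0 < t := div_pos hδ (by linarith)
  have hmem : x + t • h ∈ Metric.ball x δ := by
    rw [Metric.mem_ball, dist_eq_norm, add_sub_cancel_left, norm_smul, Real.norm_eq_abs,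
      abs_of_pos ht0, ht, div_mul_eq_mul_div, div_lt_iff₀ (by linarith : (0:ℝ) < ‖h‖ + 1)]
    nlinarith
  have hfin := hball _ hmem
  rw [add_sub_cancel_left, real_inner_smul_left, norm_smul, Real.norm_eq_abs,
    abs_of_pos ht0, real_inner_self_eq_norm_sq] at hfin
  nlinarith [hfin, mul_pos ht0 (pow_pos hn 2)]

lemma ell_cont (S : Matrix (Fin d) (Fin d) ℝ) (x : Euc d) :
    Continuous fun y : Euc d => ell S y x := by
  have h1 : Continuous fun y : Euc d => matVec S y := (mvCLM S).continuous
  simp only [ell, sbil_eq_inner]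
  exact (continuous_const.inner h1).sub ((continuous_id.inner h1).div_const 2)

/-- Core of part (a): at interior differentiability points, `S⁻¹∇ψ(x) ∈ G`;
moreover the gradient is `S ystar` for a maximizer `ystar ∈ G`. -/
lemma grad_in_G {S : Matrix (Fin d) (Fin d) ℝ} {G : Set (Euc d)} (hs : S.IsSymm)
    (hinv : IsUnit S.det) (hGc : IsClosed G) (hGne : G.Nonempty) (hmono : SMonotone S G)
    {x : Euc d} (hx : x ∈ interior (effDom (fitz S G)))
    (hdiff : DifferentiableAt ℝ (toRealFun (fitz S G)) x) :
    matVec S⁻¹ (gradient (toRealFun (fitz S G)) x) ∈ G := by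
  set f := toRealFun (fitz S G) with hf
  set c := f x with hc
  obtain ⟨r, hr, M, hball, hbound⟩ := exists_local_bound hGne hx
  have hMc : c ≤ M := hbound x (Metric.mem_closedBall_self hr.le)
  have hsel : ∀ n : ℕ, ∃ y ∈ G, c - 1 / (n + 1) < ell S y x := fun n =>
    exists_ell_close hGne (interior_subset hx) (by positivity)
  choose y hyG hy using hsel
  -- uniform bound on `S y n`
  have hb : ∀ n, ‖matVec S (y n)‖ ≤ (M - c + 1) / r := by
    intro n
    have h3 : c - 1 ≤ ell S (y n) x := by
      have h4 := hy n
      have h5 : (1 : ℝ) / (n + 1) ≤ 1 := by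
        rw [div_le_one (by positivity)]
        have : (0:ℝ) ≤ (n:ℝ) := Nat.cast_nonneg n
        linarith
      linarith
    rcases eq_or_ne (matVec S (y n)) 0 with h0 | h0
    · rw [h0, norm_zero]
      apply div_nonneg _ hr.le
      linarith
    · set m := matVec S (y n) with hm
      have hmpos : 0 < ‖m‖ := norm_pos_iff.2 h0
      set ζ := (r / ‖m‖) • m with hζdef
      have hζ : ‖ζ‖ = r := by
        rw [hζdef, norm_smul, Real.norm_eq_abs, abs_of_pos (div_pos hr hmpos)]
        field_simp
      have hmem : x + ζ ∈ Metric.closedBall x r := by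
        simp [Metric.mem_closedBall, dist_eq_norm, hζ]
      have hdom : x + ζ ∈ effDom (fitz S G) := interior_subset (hball hmem)
      have hell : ell S (y n) (x + ζ) ≤ M :=
        (ell_le_toReal hGne hdom (hyG n)).trans (hbound _ hmem)
      rw [ell_add] at hell
      have h2 : ⟪ζ, m⟫ = r * ‖m‖ := by
        rw [hζdef, real_inner_smul_left, real_inner_self_eq_norm_sq]
        field_simp
      rw [le_div_iff₀ hr]
      rw [h2] at hell
      nlinarith
  -- the sequence `y n` is bounded
  set R := ‖mvCLM (S⁻¹)‖ * ((M - c + 1) / r) with hR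
  have hyb : ∀ n, y n ∈ Metric.closedBall (0 : Euc d) R := by
    intro n
    rw [Metric.mem_closedBall, dist_zero_right]
    have h1 : y n = mvCLM S⁻¹ (matVec S (y n)) := (matVec_inv_matVec hinv (y n)).symm
    rw [h1]
    calc ‖mvCLM S⁻¹ (matVec S (y n))‖ ≤ ‖mvCLM (S⁻¹)‖ * ‖matVec S (y n)‖ :=
      (mvCLM S⁻¹).le_opNorm _
    _ ≤ R := by
      rw [hR]
      exact mul_le_mul_of_nonneg_left (hb n) (norm_nonneg _)
  obtain ⟨ystar, _, φ, hφ, hconv⟩ :=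
    tendsto_subseq_of_bounded Metric.isBounded_closedBall hyb
  have hystarG : ystar ∈ G := hGc.mem_of_tendsto hconv (Filter.Eventually.of_forall fun n => hyG _)
  -- `ystar` attains the supremum
  have htend : Tendsto (fun n => ell S (y (φ n)) x) atTop (𝓝 (ell S ystar x)) :=
    ((ell_cont S x).tendsto ystar).comp hconv
  have hup : ell S ystar x ≤ c :=
    le_of_tendsto htend (Filter.Eventually.of_forall fun n =>
      ell_le_toReal hGne (interior_subset hx) (hyG _))
  have hlow : c ≤ ell S ystar x := by
    have htend2 : Tendsto (fun n : ℕ => c - 1 / ((φ n : ℝ) + 1)) atTop (𝓝 (c - 0)) := by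
      apply Tendsto.const_sub
      exact tendsto_one_div_add_atTop_nhds_zero_nat.comp hφ.tendsto_atTop
    rw [sub_zero] at htend2
    exact le_of_tendsto_of_tendsto' htend2 htend fun n => (hy (φ n)).le
  have hatt : fitz S G x = ((ell S ystar x : ℝ) : EReal) := by
    rw [fitz_eq_coe hGne (interior_subset hx), le_antisymm hup hlow]
  have hsub : matVec S ystar ∈ subdiff (fitz S G) x := attain_mem_subdiff hystarG hatt
  have := subdiff_unique hGne hx hdiff hsub
  rw [← this, matVec_inv_matVec hinv]
  exact hystarG

/-- Differentiability points are dense in the interior of the domain. -/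
lemma exists_diff_near {S : Matrix (Fin d) (Fin d) ℝ} {G : Set (Euc d)} (hGne : G.Nonempty)
    {z : Euc d} (hz : z ∈ interior (effDom (fitz S G))) {ρ : ℝ} (hρ : 0 < ρ) :
    ∃ u, u ∈ interior (effDom (fitz S G)) ∧ dist u z < ρ ∧
      DifferentiableAt ℝ (toRealFun (fitz S G)) u := by
  set f := toRealFun (fitz S G) with hf
  obtain ⟨K, t, ht, hlip⟩ := (f_convexOn (S := S) hGne).locallyLipschitzOn_interior hz
  rw [nhdsWithin_eq_nhds.2 (isOpen_interior.mem_nhds hz)] at ht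
  obtain ⟨r1, hr1, hball1⟩ := Metric.mem_nhds_iff.1 ht
  obtain ⟨rD, hrD, hballD⟩ := Metric.isOpen_iff.1 isOpen_interior z hz
  set r2 := min r1 (min ρ rD) with hr2def
  have hr2 : 0 < r2 := lt_min hr1 (lt_min hρ hrD)
  have hsub1 : Metric.ball z r2 ⊆ t := (Metric.ball_subset_ball (min_le_left _ _)).trans hball1
  have hsubD : Metric.ball z r2 ⊆ interior (effDom (fitz S G)) :=
    (Metric.ball_subset_ball ((min_le_right _ _).trans (min_le_right _ _))).trans hballD
  have hlip2 : LipschitzOnWith K f (Metric.ball z r2) := hlip.mono hsub1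
  obtain ⟨g, hgl, hfg⟩ := hlip2.extend_real
  have hae := hgl.ae_differentiableAt (μ := MeasureTheory.volume)
  have hex : ∃ u ∈ Metric.ball z r2, DifferentiableAt ℝ g u := by
    by_contra hcon
    push_neg at hcon
    have hsub : Metric.ball z r2 ⊆ {u | ¬ DifferentiableAt ℝ g u} := fun u hu => hcon u hu
    have h0 : MeasureTheory.volume (Metric.ball z r2) = 0 :=
      MeasureTheory.measure_mono_null hsub (MeasureTheory.ae_iff.1 hae)
    exact (measure_ball_pos _ _ hr2).ne' h0
  obtain ⟨u, hu, hdg⟩ := hex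
  have hEq : f =ᶠ[𝓝 u] g := Filter.eventuallyEq_of_mem (Metric.isOpen_ball.mem_nhds hu) hfg
  refine ⟨u, hsubD hu, lt_of_lt_of_le (Metric.mem_ball.1 hu)
    ((min_le_right _ _).trans (min_le_left _ _)), hdg.congr_of_eventuallyEq hEq⟩

/-- Limits of gradients along sequences of differentiability points are subgradients. -/
lemma lim_grad_subdiff {S : Matrix (Fin d) (Fin d) ℝ} {G : Set (Euc d)} (hGne : G.Nonempty)
    {xs : ℕ → Euc d} {x v : Euc d}
    (hdom : ∀ n, xs n ∈ interior (effDom (fitz S G)))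
    (hdiff : ∀ n, DifferentiableAt ℝ (toRealFun (fitz S G)) (xs n))
    (hx : Tendsto xs atTop (𝓝 x))
    (hv : Tendsto (fun n => gradient (toRealFun (fitz S G)) (xs n)) atTop (𝓝 v)) :
    v ∈ subdiff (fitz S G) x := by
  set f := toRealFun (fitz S G) with hf
  intro z
  by_cases hp : x + z ∈ effDom (fitz S G)
  swap
  · have : fitz S G (x + z) = ⊤ := by by_contra h; exact hp h
    rw [this]; exact le_top
  set p := x + z with hpdef
  have hBn : ∀ n, f (xs n) ≤ f p - ⟪p - xs n, gradient f (xs n)⟫ := by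
    intro n
    have := grad_subgrad_real hGne (hdom n) (hdiff n) hp
    linarith
  have hBtend : Tendsto (fun n => f p - ⟪p - xs n, gradient f (xs n)⟫) atTop
      (𝓝 (f p - ⟪z, v⟫)) := by
    have h1 : Tendsto (fun n => p - xs n) atTop (𝓝 (p - x)) := tendsto_const_nhds.sub hx
    have h2 : Tendsto (fun n => (⟪p - xs n, gradient f (xs n)⟫ : ℝ)) atTop (𝓝 ⟪p - x, v⟫) :=
      h1.inner hv
    rw [hpdef, add_sub_cancel_left] at h2
    exact tendsto_const_nhds.sub h2
  have hfle : ∀ y ∈ G, ell S y x ≤ f p - ⟪z, v⟫ := by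
    intro y hy
    have hcx : Continuous fun x' : Euc d => ell S y x' := by
      simp only [ell, sbil_eq_inner]
      exact (continuous_id.inner continuous_const).sub continuous_const
    have htend : Tendsto (fun n => ell S y (xs n)) atTop (𝓝 (ell S y x)) :=
      (hcx.tendsto x).comp hx
    refine le_of_tendsto_of_tendsto' htend hBtend fun n => ?_
    exact (ell_le_toReal hGne (interior_subset (hdom n)) hy).trans (hBn n)
  have hψle : fitz S G x ≤ (((f p - ⟪z, v⟫ : ℝ)) : EReal) :=
    fitz_le fun y hy => EReal.coe_le_coe_iff.2 (hfle y hy)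
  calc ((⟪z, v⟫ : ℝ) : EReal) + fitz S G x
      ≤ ((⟪z, v⟫ : ℝ) : EReal) + ((f p - ⟪z, v⟫ : ℝ) : EReal) := add_le_add_right hψle _
  _ = ((f p : ℝ) : EReal) := by rw [← EReal.coe_add]; exact EReal.coe_eq_coe_iff.2 (by ring)
  _ = fitz S G p := (fitz_eq_coe hGne hp).symm

set_option maxHeartbeats 1000000 in
/-- KEY: if the subdifferential at `x` is nonempty, there is a sequence of interior
differentiability points converging to `x` whose gradients converge. -/
lemma key_seq {S : Matrix (Fin d) (Fin d) ℝ} {G : Set (Euc d)} (hs : S.IsSymm)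
    (hGne : G.Nonempty) (hmono : SMonotone S G)
    (hD : (interior (effDom (fitz S G))).Nonempty)
    {x w : Euc d} (hw : w ∈ subdiff (fitz S G) x) :
    ∃ (xs : ℕ → Euc d) (v : Euc d),
      (∀ n, xs n ∈ interior (effDom (fitz S G)) ∧
        DifferentiableAt ℝ (toRealFun (fitz S G)) (xs n)) ∧
      Tendsto xs atTop (𝓝 x) ∧
      Tendsto (fun n => gradient (toRealFun (fitz S G)) (xs n)) atTop (𝓝 v) := by
  classical
  set f := toRealFun (fitz S G) with hf
  obtain ⟨y₀, hy₀⟩ := id hGne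
  have hxdom : x ∈ effDom (fitz S G) := subdiff_ne_top hs hmono hy₀ hw
  obtain ⟨x₀, hx₀⟩ := id hD
  obtain ⟨r₀, hr₀, M, hball, hbound⟩ := exists_local_bound hGne hx₀
  set c := f x with hc
  set M' := M - c + ‖w‖ * (‖x₀ - x‖ + r₀) with hM'
  have hsubR : ∀ p ∈ effDom (fitz S G), ⟪p - x, w⟫ + c ≤ f p := by
    intro p hp
    have h := hw (p - x)
    rw [add_sub_cancel, fitz_eq_coe hGne hxdom, fitz_eq_coe hGne hp, ← EReal.coe_add,
      EReal.coe_le_coe_iff] at h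
    exact h
  have hM'0 : 0 ≤ M' := by
    have h1 := hsubR x₀ (interior_subset hx₀)
    have h2 : f x₀ ≤ M := hbound x₀ (Metric.mem_closedBall_self hr₀.le)
    have h4 := neg_abs_le (⟪x₀ - x, w⟫ : ℝ)
    have h3 : |⟪x₀ - x, w⟫| ≤ ‖x₀ - x‖ * ‖w‖ := abs_real_inner_le_norm _ _
    have h5 : 0 ≤ ‖w‖ * r₀ := mul_nonneg (norm_nonneg _) hr₀.le
    rw [hM']
    nlinarith
  -- the dilated balls lie in the domain interior and φ ≤ t M' on them
  have hky : ∀ t : ℝ, 0 < t → t ≤ 1 → ∀ v ∈ Metric.ball (x + t • (x₀ - x)) (t * r₀),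
      v ∈ interior (effDom (fitz S G)) ∧ f v - c - ⟪w, v - x⟫ ≤ t * M' := by
    intro t ht0 ht1 v hv
    have htne : t ≠ 0 := ht0.ne'
    have hvn : ‖v - (x + t • (x₀ - x))‖ < t * r₀ := by
      rw [Metric.mem_ball, dist_eq_norm] at hv; exact hv
    set b := x₀ + (1 / t) • (v - (x + t • (x₀ - x))) with hbdef
    have hbmem : b ∈ Metric.ball x₀ r₀ := by
      rw [Metric.mem_ball, hbdef, dist_eq_norm, add_sub_cancel_left, norm_smul,
        Real.norm_eq_abs, abs_of_pos (by positivity : (0:ℝ) < 1 / t),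
        div_mul_eq_mul_div, one_mul, div_lt_iff₀ ht0]
      linarith
    have hbD : b ∈ interior (effDom (fitz S G)) :=
      hball (Metric.ball_subset_closedBall hbmem)
    have hvcombo : t • b + (1 - t) • x = v := by
      rw [hbdef]
      match_scalars <;> field_simp <;> ring
    have hvD : v ∈ interior (effDom (fitz S G)) := by
      rw [← hvcombo]
      exact (effDom_convex hGne).combo_interior_closure_mem_interior hbD
        (subset_closure hxdom) ht0 (by linarith) (by ring)
    refine ⟨hvD, ?_⟩
    have hconv := (f_convexOn (S := S) hGne).2 (interior_subset hbD) hxdom ht0.le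
      (by linarith : (0:ℝ) ≤ 1 - t) (by ring)
    rw [hvcombo] at hconv
    simp only [smul_eq_mul] at hconv
    have hvx : v - x = t • (b - x) := by rw [← hvcombo]; module
    have hlin : ⟪w, v - x⟫ = t * ⟪w, b - x⟫ := by rw [hvx, real_inner_smul_right]
    have hfb : f b ≤ M := hbound b (Metric.ball_subset_closedBall hbmem)
    have hwb : -(⟪w, b - x⟫ : ℝ) ≤ ‖w‖ * (‖x₀ - x‖ + r₀) := by
      have h1 : |⟪w, b - x⟫| ≤ ‖w‖ * ‖b - x‖ := abs_real_inner_le_norm w (b - x)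
      have h2 : ‖b - x‖ ≤ ‖x₀ - x‖ + r₀ := by
        have h3 : dist b x ≤ dist b x₀ + dist x₀ x := dist_triangle b x₀ x
        have h6 := Metric.mem_ball.1 hbmem
        rw [dist_eq_norm] at h3 h6
        rw [dist_eq_norm, dist_eq_norm] at h3
        linarith
      have h4 := neg_abs_le (⟪w, b - x⟫ : ℝ)
      nlinarith [norm_nonneg w]
    rw [hlin]
    have hφb : f b - c - ⟪w, b - x⟫ ≤ M' := by rw [hM']; linarith
    nlinarith
  -- gradient bound at differentiability points of the half-balls
  have hgradb : ∀ t : ℝ, 0 < t → t ≤ 1 →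
      ∀ u ∈ Metric.ball (x + t • (x₀ - x)) (t * r₀ / 2),
      u ∈ interior (effDom (fitz S G)) → DifferentiableAt ℝ f u →
      ‖gradient f u - w‖ ≤ 2 * M' / r₀ := by
    intro t ht0 ht1 u hu huD hud
    set g := gradient f u with hg
    rcases eq_or_ne (g - w) 0 with h0 | h0
    · rw [h0, norm_zero]; positivity
    · have hgw : 0 < ‖g - w‖ := norm_pos_iff.2 h0
      set ζ := ((t * r₀ / 2) / ‖g - w‖) • (g - w) with hζdef
      have hζn : ‖ζ‖ = t * r₀ / 2 := by
        rw [hζdef, norm_smul, Real.norm_eq_abs, abs_of_pos (by positivity)]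
        field_simp
      have hmem : u + ζ ∈ Metric.ball (x + t • (x₀ - x)) (t * r₀) := by
        rw [Metric.mem_ball] at hu ⊢
        calc dist (u + ζ) (x + t • (x₀ - x)) ≤ dist (u + ζ) u + dist u (x + t • (x₀ - x)) :=
          dist_triangle _ _ _
        _ < t * r₀ / 2 + t * r₀ / 2 := by
          rw [dist_eq_norm, add_sub_cancel_left, hζn]
          exact add_lt_add_of_le_of_lt (le_refl _) hu
        _ = t * r₀ := by ring
      obtain ⟨huζD, hφuζ⟩ := hky t ht0 ht1 (u + ζ) hmem
      have hgs : ⟪ζ, g⟫ ≤ f (u + ζ) - f u := by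
        have := grad_subgrad_real hGne huD hud (interior_subset huζD)
        rw [add_sub_cancel_left] at this
        exact this
      have hφu : 0 ≤ f u - c - ⟪w, u - x⟫ := by
        have h1 := hsubR u (interior_subset huD)
        have h2 : (⟪u - x, w⟫ : ℝ) = ⟪w, u - x⟫ := real_inner_comm _ _
        linarith
      have hsplit : (⟪w, u + ζ - x⟫ : ℝ) = ⟪w, u - x⟫ + ⟪w, ζ⟫ := by
        rw [show u + ζ - x = (u - x) + ζ by abel, inner_add_right]
      have hcm : (⟪ζ, w⟫ : ℝ) = ⟪w, ζ⟫ := real_inner_comm _ _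
      have hkey : ⟪ζ, g - w⟫ ≤ t * M' := by
        rw [inner_sub_right]
        rw [hsplit] at hφuζ
        linarith
      have hζgw : (⟪ζ, g - w⟫ : ℝ) = (t * r₀ / 2) * ‖g - w‖ := by
        rw [hζdef, real_inner_smul_left, real_inner_self_eq_norm_sq]
        field_simp
      rw [hζgw] at hkey
      rw [le_div_iff₀ hr₀]
      nlinarith
  -- construct the sequence of differentiability points
  have hseq : ∀ n : ℕ, ∃ u, u ∈ interior (effDom (fitz S G)) ∧ DifferentiableAt ℝ f u ∧
      dist u (x + (1 / ((n : ℝ) + 1)) • (x₀ - x)) < (1 / ((n : ℝ) + 1)) * r₀ / 2 := by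
    intro n
    set t := (1 / ((n : ℝ) + 1)) with htdef
    have ht0 : 0 < t := by positivity
    have hxt : x + t • (x₀ - x) ∈ interior (effDom (fitz S G)) := by
      have h1 : t ≤ 1 := by
        rw [htdef, div_le_one (by positivity)]
        have : (0:ℝ) ≤ (n:ℝ) := Nat.cast_nonneg n
        linarith
      have := (effDom_convex hGne).combo_interior_closure_mem_interior hx₀
        (subset_closure hxdom) ht0 (by linarith : (0:ℝ) ≤ 1 - t) (by ring)
      rw [show x + t • (x₀ - x) = t • x₀ + (1 - t) • x by module] at *
      exact this
    obtain ⟨u, huD, hdist, hdiffu⟩ := exists_diff_near hGne hxt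
      (by positivity : (0:ℝ) < t * r₀ / 2)
    exact ⟨u, huD, hdiffu, hdist⟩
  choose u huD hudiff hudist using hseq
  have htle1 : ∀ n : ℕ, (1 / ((n : ℝ) + 1)) ≤ 1 := by
    intro n
    rw [div_le_one (by positivity)]
    have : (0:ℝ) ≤ (n:ℝ) := Nat.cast_nonneg n
    linarith
  -- u n → x
  have hunx : Tendsto u atTop (𝓝 x) := by
    rw [tendsto_iff_dist_tendsto_zero]
    have hlim : Tendsto (fun n : ℕ => (1 / ((n : ℝ) + 1)) * (r₀ / 2 + ‖x₀ - x‖)) atTop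
        (𝓝 0) := by
      have := tendsto_one_div_add_atTop_nhds_zero_nat.mul_const (r₀ / 2 + ‖x₀ - x‖)
      rwa [zero_mul] at this
    refine squeeze_zero (fun n => dist_nonneg) (fun n => ?_) hlim
    set t := (1 / ((n : ℝ) + 1)) with htdef
    have ht0 : 0 < t := by positivity
    calc dist (u n) x ≤ dist (u n) (x + t • (x₀ - x)) + dist (x + t • (x₀ - x)) x :=
      dist_triangle _ _ _
    _ ≤ t * r₀ / 2 + t * ‖x₀ - x‖ := by
      refine add_le_add (hudist n).le ?_
      rw [dist_eq_norm, add_sub_cancel_left, norm_smul, Real.norm_eq_abs, abs_of_pos ht0]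
    _ = t * (r₀ / 2 + ‖x₀ - x‖) := by ring
  -- gradients are bounded, extract a convergent subsequence
  have hgb : ∀ n, gradient f (u n) ∈ Metric.closedBall w (2 * M' / r₀) := by
    intro n
    rw [Metric.mem_closedBall, dist_eq_norm]
    exact hgradb _ (by positivity) (htle1 n) (u n) (Metric.mem_ball.2 (hudist n))
      (huD n) (hudiff n)
  obtain ⟨v, _, φ, hφ, hgconv⟩ :=
    tendsto_subseq_of_bounded Metric.isBounded_closedBall hgb
  refine ⟨u ∘ φ, v, fun n => ⟨huD _, hudiff _⟩, hunx.comp hφ.tendsto_atTop, ?_⟩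
  exact hgconv

end Stmt12Aux

/-- Lemma 6 of the paper. -/
theorem stmt12 {d : ℕ} (S : Matrix (Fin d) (Fin d) ℝ)
    (hsymm : S.IsSymm) (hinv : IsUnit S.det)
    (G : Set (Euc d)) (hGc : IsClosed G) (hGne : G.Nonempty)
    (hmono : SMonotone S G)
    (hD : (interior (effDom (fitz S G))).Nonempty) :
    matVec S⁻¹ '' gradRange (fitz S G) ⊆ G ∧
    {x | (proj S G x).Nonempty} =
      {x | (matVec S⁻¹ '' subdiff (fitz S G) x).Nonempty} ∧
    {x | (matVec S⁻¹ '' subdiff (fitz S G) x).Nonempty} =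
      {x | (matVec S⁻¹ '' clarke (fitz S G) x).Nonempty} ∧
    (∀ x ∈ G, fitz S G x = fconj (fitz S G) (matVec S x) ∧
      fitz S G x = ((Sbil S x x / 2 : ℝ) : EReal)) ∧
    ∀ x : Euc d, proj S G x = (matVec S⁻¹ '' subdiff (fitz S G) x) ∩ G := by
  refine ⟨?_, ?_, ?_, ?_, ?_⟩
  · -- part (a): range of S⁻¹∇ψ is contained in G
    rintro _ ⟨v, ⟨u, hu, rfl⟩, rfl⟩
    exact Stmt12Aux.grad_in_G hsymm hinv hGc hGne hmono hu.1 hu.2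
  · -- part (b): dom P_G = dom ∂ψ
    ext x
    simp only [Set.mem_setOf_eq]
    constructor
    · rintro ⟨y, hy⟩
      rw [Stmt12Aux.proj_eq_subdiff_inter hsymm hinv hGne hmono x] at hy
      exact ⟨y, hy.1⟩
    · rintro ⟨y, w, hw, rfl⟩
      obtain ⟨xs, v, hmem, hxs, hgrad⟩ := Stmt12Aux.key_seq hsymm hGne hmono hD hw
      have hvsub : v ∈ subdiff (fitz S G) x :=
        Stmt12Aux.lim_grad_subdiff hGne (fun n => (hmem n).1) (fun n => (hmem n).2) hxs hgrad
      have hvG : matVec S⁻¹ v ∈ G := by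
        have hseq : Tendsto (fun n => (Stmt12Aux.mvCLM S⁻¹)
            (gradient (toRealFun (fitz S G)) (xs n))) atTop
            (𝓝 ((Stmt12Aux.mvCLM S⁻¹) v)) :=
          (((Stmt12Aux.mvCLM S⁻¹).continuous.tendsto v).comp hgrad)
        exact hGc.mem_of_tendsto hseq (Filter.Eventually.of_forall fun n =>
          Stmt12Aux.grad_in_G hsymm hinv hGc hGne hmono (hmem n).1 (hmem n).2)
      refine ⟨matVec S⁻¹ v, ?_⟩
      rw [Stmt12Aux.proj_eq_subdiff_inter hsymm hinv hGne hmono x]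
      exact ⟨⟨v, hvsub, rfl⟩, hvG⟩
  · -- part (c): dom ∂ψ = dom ∂̄ψ
    ext x
    simp only [Set.mem_setOf_eq]
    constructor
    · rintro ⟨y, w, hw, rfl⟩
      obtain ⟨xs, v, hmem, hxs, hgrad⟩ := Stmt12Aux.key_seq hsymm hGne hmono hD hw
      refine ⟨matVec S⁻¹ v, v, ?_, rfl⟩
      apply subset_closure
      apply subset_convexHull
      exact ⟨xs, fun n => ⟨(hmem n).1, (hmem n).2⟩, hxs, hgrad⟩
    · rintro ⟨y, v, hv, rfl⟩
      have hne : {v0 : Euc d | ∃ xs : ℕ → Euc d, (∀ n, xs n ∈ domGrad (fitz S G)) ∧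
          Tendsto xs atTop (𝓝 x) ∧
          Tendsto (fun n => gradient (toRealFun (fitz S G)) (xs n)) atTop
            (𝓝 v0)}.Nonempty := by
        by_contra h
        rw [Set.not_nonempty_iff_eq_empty] at h
        rw [clarke, h, convexHull_empty, closure_empty] at hv
        exact hv
      obtain ⟨v0, xs, hmemd, hxs, hgrad⟩ := hne
      have hvsub : v0 ∈ subdiff (fitz S G) x :=
        Stmt12Aux.lim_grad_subdiff hGne (fun n => (hmemd n).1) (fun n => (hmemd n).2)
          hxs hgrad
      exact ⟨matVec S⁻¹ v0, v0, hvsub, rfl⟩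
  · -- part (d)
    intro x hx
    exact ⟨Stmt12Aux.fitz_eq_fconj hsymm hGne hmono hx, Stmt12Aux.fitz_on_G hsymm hmono hx⟩
  · -- part (e)
    exact Stmt12Aux.proj_eq_subdiff_inter hsymm hinv hGne hmono

end
end

section
/- Let S be an invertible symmetric d×d real matrix, let j ∈ {1,…,d}, let C be a compact set in ℝ^d with y^j = 1 for all y ∈ C, let h(x) = x^j + g₁(x^{−j}) − g₂(x^{−j}) with g₁, g₂ convex of linear growth on ℝ^{d−1}, and let H := {x ∈ ℝ^d : h(Sx) = 0}. Then h ∈ H^j_C if and only if for every x ∈ H there exists an S-normal vector w ∈ C to H at x. -/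
open Filter Topology Set Pointwise
open scoped RealInnerProductSpace

noncomputable section

/-! ### Auxiliary lemmas for the proof of `stmt13` -/

section Stmt13Aux

open MeasureTheory

variable {d k : ℕ}

/-- `Fin.insertNth` on Euclidean vectors. -/
def insN (j : Fin (d+1)) (a : ℝ) (u : Euc d) : Euc (d+1) :=
  WithLp.toLp 2 (Fin.insertNth j a u.ofLp)

@[simp] lemma insN_apply_same (j : Fin (d+1)) (a : ℝ) (u : Euc d) : insN j a u j = a := by
  simp [insN]

@[simp] lemma insN_apply_succAbove (j : Fin (d+1)) (a : ℝ) (u : Euc d) (m : Fin d) :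
    insN j a u (j.succAbove m) = u m := by
  simp [insN]

lemma aux_insertNth_sub (j : Fin (d+1)) (a b : ℝ) (u v : Euc d) :
    (insN j a u : Euc (d+1)) - insN j b v = insN j (a - b) (u - v) := by
  ext i
  rcases eq_or_ne i j with rfl | hij
  · simp [insN_apply_same]
  · obtain ⟨m, rfl⟩ := Fin.exists_succAbove_eq hij
    simp [insN_apply_succAbove]

lemma aux_dropCoord_insertNth (j : Fin (d+1)) (a : ℝ) (u : Euc d) :
    dropCoord j (insN j a u) = u := by
  ext m; simp [dropCoord, insN_apply_succAbove]

lemma aux_insertNth_eta (j : Fin (d+1)) (z : Euc (d+1)) :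
    (insN j (z j) (dropCoord j z) : Euc (d+1)) = z := by
  ext i
  rcases eq_or_ne i j with rfl | hij
  · simp [insN_apply_same]
  · obtain ⟨m, rfl⟩ := Fin.exists_succAbove_eq hij
    simp [insN_apply_succAbove, dropCoord]

lemma aux_inner_split (j : Fin (d+1)) (w v : Euc (d+1)) :
    ⟪w, v⟫ = w j * v j + ⟪dropCoord j w, dropCoord j v⟫ := by
  rw [PiLp.inner_apply, PiLp.inner_apply]
  simp only [RCLike.inner_apply, conj_trivial]
  rw [Fin.sum_univ_succAbove (fun i => v i * w i) j, mul_comm (v j)]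
  rfl

lemma aux_norm_sq_split (j : Fin (d+1)) (z : Euc (d+1)) :
    ‖z‖^2 = (z j)^2 + ‖dropCoord j z‖^2 := by
  rw [← real_inner_self_eq_norm_sq, ← real_inner_self_eq_norm_sq, aux_inner_split j z z, sq]

lemma aux_norm_dropCoord_le (j : Fin (d+1)) (z : Euc (d+1)) : ‖dropCoord j z‖ ≤ ‖z‖ := by
  have h := aux_norm_sq_split j z
  nlinarith [norm_nonneg z, norm_nonneg (dropCoord j z), sq_nonneg (z j)]

lemma aux_norm_le_add (j : Fin (d+1)) (z : Euc (d+1)) : ‖z‖ ≤ |z j| + ‖dropCoord j z‖ := by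
  have h := aux_norm_sq_split j z
  nlinarith [norm_nonneg z, norm_nonneg (dropCoord j z), abs_nonneg (z j), sq_abs (z j),
    mul_nonneg (abs_nonneg (z j)) (norm_nonneg (dropCoord j z))]

lemma aux_matVec_eq_mulVec (M : Matrix (Fin k) (Fin k) ℝ) (y : Euc k) :
    matVec M y = M.mulVec y := rfl

/-- `matVec` as a continuous linear map. -/
noncomputable def mulL (M : Matrix (Fin k) (Fin k) ℝ) : Euc k →L[ℝ] Euc k :=
  LinearMap.toContinuousLinearMap
  { toFun := matVec M
    map_add' := by
      intro x y; ext i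
      simp [matVec, mul_add, Finset.sum_add_distrib]
    map_smul' := by
      intro c x; ext i
      simp [matVec, Finset.mul_sum, mul_left_comm] }

lemma mulL_apply (M : Matrix (Fin k) (Fin k) ℝ) (y : Euc k) : mulL M y = matVec M y := rfl

/-- `dropCoord` as a continuous linear map. -/
noncomputable def dropL (j : Fin (d+1)) : Euc (d+1) →L[ℝ] Euc d :=
  LinearMap.toContinuousLinearMap
  { toFun := dropCoord j
    map_add' := fun _ _ => rfl
    map_smul' := fun _ _ => rfl }

lemma dropL_apply (j : Fin (d+1)) (x : Euc (d+1)) : dropL j x = dropCoord j x := rfl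

lemma aux_Sbil_eq_inner (S : Matrix (Fin k) (Fin k) ℝ) (x y : Euc k) :
    Sbil S x y = ⟪x, matVec S y⟫ := by
  rw [PiLp.inner_apply]
  simp only [RCLike.inner_apply, conj_trivial, Sbil, matVec]
  congr 1; funext i
  rw [Finset.sum_mul]
  congr 1; funext m; ring

lemma aux_matVec_inv_left (S : Matrix (Fin k) (Fin k) ℝ) (h : IsUnit S.det) (y : Euc k) :
    matVec S⁻¹ (matVec S y) = y := by
  apply WithLp.ofLp_injective 2
  simp [aux_matVec_eq_mulVec, Matrix.mulVec_mulVec, Matrix.nonsing_inv_mul S h]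

lemma aux_matVec_inv_right (S : Matrix (Fin k) (Fin k) ℝ) (h : IsUnit S.det) (y : Euc k) :
    matVec S (matVec S⁻¹ y) = y := by
  apply WithLp.ofLp_injective 2
  simp [aux_matVec_eq_mulVec, Matrix.mulVec_mulVec, Matrix.mul_nonsing_inv S h]

/-- ε-δ consequence of differentiability. -/
lemma aux_hasFDerivAt_epsdelta {f : Euc k → ℝ} {x : Euc k} {L : Euc k →L[ℝ] ℝ}
    (hf : HasFDerivAt f L x) {ε : ℝ} (hε : 0 < ε) :
    ∃ δ > 0, ∀ y, ‖y - x‖ < δ → |f y - f x - L (y - x)| ≤ ε * ‖y - x‖ := by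
  have h2 := (Asymptotics.isLittleO_iff.mp hf.isLittleO) hε
  rw [Metric.eventually_nhds_iff] at h2
  obtain ⟨δ, hδ, hball⟩ := h2
  exact ⟨δ, hδ, fun y hy => by
    have := hball (show dist y x < δ by rwa [dist_eq_norm])
    simpa [Real.norm_eq_abs] using this⟩

/-- convex + linear growth ⇒ Lipschitz bound. -/
lemma aux_conv_lip {K : ℝ} (g : Euc k → ℝ) (hg : ConvexOn ℝ Set.univ g) (hK : 0 < K)
    (hG : ∀ x, |g x| ≤ K * (1 + ‖x‖)) (x y : Euc k) : g y - g x ≤ K * ‖y - x‖ := by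
  rcases eq_or_ne y x with rfl | hne
  · simp
  have hr : 0 < ‖y - x‖ := by simpa [sub_ne_zero] using norm_sub_pos_iff.mpr hne
  set r := ‖y - x‖ with hrdef
  refine le_of_forall_pos_le_add ?_
  intro ε hε
  set R : ℝ := max r (r * (2 * K * (1 + ‖x‖)) / ε) with hRdef
  have hRr : r ≤ R := le_max_left _ _
  have hR : 0 < R := lt_of_lt_of_le hr hRr
  set lam := r / R with hlam
  have hlam0 : 0 < lam := div_pos hr hR
  have hlam1 : lam ≤ 1 := (div_le_one hR).mpr hRr
  set z : Euc k := x + (R / r) • (y - x) with hz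
  have hyz : y = (1 - lam) • x + lam • z := by
    rw [hz, smul_add, smul_smul, hlam]
    have : r / R * (R / r) = 1 := by field_simp
    rw [this, one_smul]
    module
  have hzx : ‖z - x‖ = R := by
    rw [hz]
    simp only [add_sub_cancel_left]
    rw [norm_smul, Real.norm_eq_abs, abs_of_pos (div_pos hR hr)]
    field_simp
    exact hrdef.symm
  have hgz : g z ≤ K * (1 + ‖x‖ + R) := by
    have h1 := hG z
    have h2 : ‖z‖ ≤ ‖x‖ + R := by
      calc ‖z‖ = ‖x + (z - x)‖ := by rw [add_sub_cancel]
        _ ≤ ‖x‖ + ‖z - x‖ := norm_add_le _ _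
        _ = ‖x‖ + R := by rw [hzx]
    nlinarith [abs_le.mp h1]
  have hconv := hg.2 (Set.mem_univ x) (Set.mem_univ z) (by linarith : (0:ℝ) ≤ 1 - lam)
    hlam0.le (by ring)
  rw [← hyz, smul_eq_mul, smul_eq_mul] at hconv
  have hgx : -g x ≤ K * (1 + ‖x‖) := by have := abs_le.mp (hG x); linarith
  have step : g y - g x ≤ lam * (g z - g x) := by nlinarith [hconv]
  have step2 : lam * (g z - g x) ≤ lam * K * R + lam * (2 * K * (1 + ‖x‖)) := by
    nlinarith [hlam0.le]
  have hlr : lam * R = r := by rw [hlam]; field_simp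
  have step3 : lam * K * R = K * r := by rw [mul_comm lam K, mul_assoc, hlr]
  have step4 : lam * (2 * K * (1 + ‖x‖)) ≤ ε := by
    rw [hlam, div_mul_eq_mul_div, div_le_iff₀ hR]
    calc r * (2 * K * (1 + ‖x‖)) = (r * (2 * K * (1 + ‖x‖)) / ε) * ε := by field_simp
      _ ≤ R * ε := by
          apply mul_le_mul_of_nonneg_right (le_max_right _ _) hε.le
      _ = ε * R := mul_comm _ _
  linarith

lemma aux_conv_lip_abs {K : ℝ} (g : Euc k → ℝ) (hg : ConvexOn ℝ Set.univ g) (hK : 0 < K)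
    (hG : ∀ x, |g x| ≤ K * (1 + ‖x‖)) (x y : Euc k) : |g x - g y| ≤ K * ‖x - y‖ := by
  rw [abs_sub_le_iff]
  refine ⟨aux_conv_lip g hg hK hG y x, ?_⟩
  rw [norm_sub_rev]
  exact aux_conv_lip g hg hK hG x y

lemma aux_lipschitzWith {K : ℝ} (g : Euc k → ℝ) (hK : 0 < K)
    (hlip : ∀ x y, |g x - g y| ≤ K * ‖x - y‖) : LipschitzWith ⟨K, hK.le⟩ g := by
  apply LipschitzWith.of_dist_le_mul
  intro x y
  rw [Real.dist_eq, dist_eq_norm]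
  exact hlip x y

/-- global subgradient existence for continuous convex functions. -/
lemma aux_subgrad_exists (g : Euc k → ℝ) (hg : ConvexOn ℝ Set.univ g) (hcont : Continuous g)
    (u₀ : Euc k) : ∃ q : Euc k, ∀ v, g u₀ + ⟪q, v - u₀⟫ ≤ g v := by
  set s : Set (Euc k × ℝ) := {p | g p.1 < p.2} with hs
  have hsopen : IsOpen s := isOpen_lt (hcont.comp continuous_fst) continuous_snd
  have hsconv : Convex ℝ s := by
    intro p hp q hq a b ha hb hab
    simp only [hs, Set.mem_setOf_eq] at hp hq ⊢
    have h1 := hg.2 (Set.mem_univ p.1) (Set.mem_univ q.1) ha hb hab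
    rw [smul_eq_mul, smul_eq_mul] at h1
    rcases eq_or_lt_of_le ha with rfl0 | hapos
    · have hb1 : b = 1 := by linarith
      refine lt_of_le_of_lt h1 ?_
      rw [← rfl0] at *
      simp only [zero_mul, zero_add, hb1, one_mul] at *
      simpa using hq
    · refine lt_of_le_of_lt h1 ?_
      have h2 : a * g p.1 < a * p.2 := by exact (mul_lt_mul_iff_right₀ hapos).mpr hp
      have h3 : b * g q.1 ≤ b * q.2 := mul_le_mul_of_nonneg_left hq.le hb
      simpa using add_lt_add_of_lt_of_le h2 h3
  have hx : ((u₀, g u₀) : Euc k × ℝ) ∉ s := by simp [hs]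
  obtain ⟨f, hf⟩ := geometric_hahn_banach_open_point hsconv hsopen hx
  set β : ℝ := f (0, 1) with hβ
  have hfsplit : ∀ (u : Euc k) (t : ℝ), f (u, t) = f (u, 0) + t * β := by
    intro u t
    have : (u, t) = (u, (0:ℝ)) + t • ((0 : Euc k), (1:ℝ)) := by
      simp [Prod.ext_iff]
    rw [this, map_add, f.map_smul, smul_eq_mul, hβ]
  have hβneg : β < 0 := by
    have h1 := hf (u₀, g u₀ + 1) (by simp [hs])
    have h0 := hfsplit u₀ (g u₀)
    rw [hfsplit, h0] at h1
    linarith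
  have key : ∀ u : Euc k, f (u, 0) + g u * β ≤ f (u₀, 0) + g u₀ * β := by
    intro u
    refine le_of_forall_pos_le_add ?_
    intro ε hε
    have h1 := hf (u, g u + ε / (-β)) (by
      simp only [hs, Set.mem_setOf_eq]
      have : 0 < ε / (-β) := div_pos hε (by linarith)
      linarith)
    have h0 := hfsplit u₀ (g u₀)
    rw [hfsplit, h0] at h1
    have hbne : β ≠ 0 := ne_of_lt hβneg
    have heq : (g u + ε / (-β)) * β = g u * β - ε := by
      have : ε * β / -β = -ε := by
        rw [div_eq_iff (neg_ne_zero.mpr hbne)]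
        ring
      rw [add_mul, div_mul_eq_mul_div, this]
      ring
    nlinarith
  refine ⟨(-β)⁻¹ • ((InnerProductSpace.toDual ℝ (Euc k)).symm
      (f.comp (ContinuousLinearMap.inl ℝ (Euc k) ℝ))), ?_⟩
  intro v
  have hinner : ∀ w : Euc k,
      ⟪(-β)⁻¹ • ((InnerProductSpace.toDual ℝ (Euc k)).symm
        (f.comp (ContinuousLinearMap.inl ℝ (Euc k) ℝ))), w⟫ = (-β)⁻¹ * f (w, 0) := by
    intro w
    rw [real_inner_smul_left, InnerProductSpace.toDual_symm_apply]
    rfl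
  rw [hinner]
  have h2 : f (v, 0) - f (u₀, 0) ≤ (g v - g u₀) * (-β) := by
    have h3 : f (v - u₀ + u₀, 0) + g (v - u₀ + u₀) * β ≤ f (u₀, 0) + g u₀ * β := key _
    simp only [sub_add_cancel] at h3
    nlinarith
  have hfv : f ((v : Euc k) - u₀, 0) = f (v, 0) - f (u₀, 0) := by
    have : ((v - u₀ : Euc k), (0:ℝ)) = (v, (0:ℝ)) - (u₀, (0:ℝ)) := by simp [Prod.ext_iff]
    rw [this, map_sub]
  rw [hfv]
  have hb : (0:ℝ) < -β := by linarith
  have h4 : (-β)⁻¹ * (f (v, 0) - f (u₀, 0)) ≤ g v - g u₀ := by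
    rw [inv_mul_le_iff₀ hb]
    nlinarith
  linarith

/-- a global subgradient of a linear-growth function is bounded by `K`. -/
lemma aux_subgrad_bound {K : ℝ} (g : Euc k → ℝ) (hK : 0 < K)
    (hG : ∀ x, |g x| ≤ K * (1 + ‖x‖))
    (u q : Euc k) (hq : ∀ v, g u + ⟪q, v - u⟫ ≤ g v) : ‖q‖ ≤ K := by
  have key : ∀ v : Euc k, ⟪q, v⟫ ≤ K * ‖v‖ := by
    intro v
    refine le_of_forall_pos_le_add ?_
    intro ε hε
    set c : ℝ := K * (1 + ‖u‖) + |g u| + 1 with hc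
    have hc0 : 0 < c := by positivity
    set t : ℝ := (c + K * ‖u‖) / ε with ht
    have ht0 : 0 < t := by positivity
    have h1 := hq (u + t • v)
    rw [add_sub_cancel_left] at h1
    rw [real_inner_smul_right] at h1
    have h2 : g (u + t • v) ≤ K * (1 + ‖u‖ + t * ‖v‖) := by
      have := abs_le.mp (hG (u + t • v))
      have hnorm : ‖u + t • v‖ ≤ ‖u‖ + t * ‖v‖ := by
        calc ‖u + t • v‖ ≤ ‖u‖ + ‖t • v‖ := norm_add_le _ _
          _ = ‖u‖ + t * ‖v‖ := by rw [norm_smul, Real.norm_eq_abs, abs_of_pos ht0]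
      nlinarith
    have h3 : -g u ≤ |g u| := neg_le_abs _
    have h4 : t * ⟪q, v⟫ ≤ K * (1 + ‖u‖) + |g u| + K * (t * ‖v‖) := by nlinarith
    have h5 : ⟪q, v⟫ ≤ (K * (1 + ‖u‖) + |g u|) / t + K * ‖v‖ := by
      rw [div_add' _ _ _ (ne_of_gt ht0), le_div_iff₀ ht0]
      nlinarith
    have h6 : (K * (1 + ‖u‖) + |g u|) / t ≤ ε := by
      rw [div_le_iff₀ ht0]
      have het : ε * t = c + K * ‖u‖ := by
        rw [ht]; field_simp
      rw [het, hc]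
      have : 0 ≤ K * ‖u‖ := by positivity
      linarith
    linarith
  rcases eq_or_ne q 0 with rfl | hq0
  · simp; positivity
  · have := key q
    rw [real_inner_self_eq_norm_sq] at this
    have hqpos : 0 < ‖q‖ := norm_pos_iff.mpr hq0
    nlinarith

/-- limits of subgradients along converging points. -/
lemma aux_subgrad_limit (g : Euc k → ℝ) (hcont : Continuous g) (us qs : ℕ → Euc k)
    (u q : Euc k) (hus : Tendsto us atTop (𝓝 u)) (hqs : Tendsto qs atTop (𝓝 q))
    (hsub : ∀ n, ∀ v, g (us n) + ⟪qs n, v - us n⟫ ≤ g v) :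
    ∀ v, g u + ⟪q, v - u⟫ ≤ g v := by
  intro v
  have hconv : Tendsto (fun n => g (us n) + ⟪qs n, v - us n⟫) atTop
      (𝓝 (g u + ⟪q, v - u⟫)) := by
    apply Tendsto.add
    · exact (hcont.tendsto u).comp hus
    · exact Tendsto.inner hqs (tendsto_const_nhds.sub hus)
  exact le_of_tendsto hconv (Eventually.of_forall fun n => hsub n v)

/-- at a point of differentiability, the only global subgradient is the gradient. -/
lemma aux_subgrad_eq_grad (g : Euc k → ℝ) (u : Euc k) (hd : DifferentiableAt ℝ g u)
    (q : Euc k) (hq : ∀ v, g u + ⟪q, v - u⟫ ≤ g v) : q = gradient g u := by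
  have hG : HasGradientAt g (gradient g u) u := hd.hasGradientAt
  have hF : HasFDerivAt g ((InnerProductSpace.toDual ℝ (Euc k)) (gradient g u)) u :=
    hG.hasFDerivAt
  have key : ∀ v : Euc k, ⟪q - gradient g u, v⟫ ≤ 0 := by
    intro v
    rcases eq_or_ne v 0 with rfl | hv0
    · simp
    have hvpos : 0 < ‖v‖ := norm_pos_iff.mpr hv0
    have hεbound : ∀ ε > 0, ⟪q - gradient g u, v⟫ ≤ ε * ‖v‖ := by
      intro ε hε
      obtain ⟨δ, hδ, hball⟩ := aux_hasFDerivAt_epsdelta hF hε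
      set t : ℝ := δ / (2 * ‖v‖) with ht
      have ht0 : 0 < t := by positivity
      set y : Euc k := u + t • v with hy
      have hyd : ‖y - u‖ < δ := by
        rw [hy, add_sub_cancel_left, norm_smul, Real.norm_eq_abs, abs_of_pos ht0, ht]
        rw [div_mul_eq_mul_div, div_lt_iff₀ (by positivity)]
        nlinarith
      have hb := hball y hyd
      rw [hy, add_sub_cancel_left] at hb
      rw [InnerProductSpace.toDual_apply_apply, real_inner_smul_right] at hb
      have hsub2 := hq y
      rw [hy, add_sub_cancel_left, real_inner_smul_right] at hsub2
      have hnorm : ‖t • v‖ = t * ‖v‖ := by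
        rw [norm_smul, Real.norm_eq_abs, abs_of_pos ht0]
      rw [hnorm] at hb
      have habs := abs_le.mp hb
      rw [inner_sub_left]
      have hkey : t * ⟪q, v⟫ - t * ⟪gradient g u, v⟫ ≤ ε * (t * ‖v‖) := by
        nlinarith [habs.2]
      rw [← mul_le_mul_iff_right₀ ht0]
      nlinarith
    by_contra hcon
    push_neg at hcon
    have hpos : 0 < ⟪q - gradient g u, v⟫ := hcon
    have := hεbound (⟪q - gradient g u, v⟫ / (2 * ‖v‖)) (by positivity)
    rw [div_mul_eq_mul_div, le_div_iff₀ (by positivity)] at this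
    nlinarith
  have h0 : ⟪q - gradient g u, q - gradient g u⟫ ≤ 0 := key _
  rw [real_inner_self_eq_norm_sq] at h0
  have hn0 : ‖q - gradient g u‖ = 0 := by nlinarith [norm_nonneg (q - gradient g u)]
  have := norm_eq_zero.mp hn0
  rwa [sub_eq_zero] at this

/-- approximate Fréchet subgradient of a convex function is a global subgradient. -/
lemma aux_fre_to_global (g : Euc k → ℝ) (hg : ConvexOn ℝ Set.univ g) (u₀ s : Euc k)
    (hF : ∀ ε > 0, ∃ δ > 0, ∀ u, ‖u - u₀‖ < δ → ⟪s, u - u₀⟫ - ε * ‖u - u₀‖ ≤ g u - g u₀) :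
    ∀ v, g u₀ + ⟪s, v - u₀⟫ ≤ g v := by
  intro v
  rcases eq_or_ne v u₀ with rfl | hv
  · simp
  have hvpos : 0 < ‖v - u₀‖ := by
    rw [norm_pos_iff, sub_ne_zero]; exact hv
  have key : ∀ ε > 0, ⟪s, v - u₀⟫ ≤ g v - g u₀ + ε * ‖v - u₀‖ := by
    intro ε hε
    obtain ⟨δ, hδ, hδprop⟩ := hF ε hε
    set t : ℝ := min (1/2) (δ / (2 * ‖v - u₀‖)) with htdef
    have ht0 : 0 < t := lt_min (by norm_num) (by positivity)
    have ht1 : t < 1 := lt_of_le_of_lt (min_le_left _ _) (by norm_num)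
    set u : Euc k := u₀ + t • (v - u₀) with hu
    have hunorm : ‖u - u₀‖ = t * ‖v - u₀‖ := by
      rw [hu, add_sub_cancel_left, norm_smul, Real.norm_eq_abs, abs_of_pos ht0]
    have hud : ‖u - u₀‖ < δ := by
      rw [hunorm]
      calc t * ‖v - u₀‖ ≤ (δ / (2 * ‖v - u₀‖)) * ‖v - u₀‖ :=
            mul_le_mul_of_nonneg_right (min_le_right _ _) (norm_nonneg _)
        _ = δ / 2 := by field_simp
        _ < δ := by linarith
    have h1 := hδprop u hud
    rw [hunorm, hu, add_sub_cancel_left, real_inner_smul_right] at h1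
    have hconvex : g (u₀ + t • (v - u₀)) ≤ (1 - t) * g u₀ + t * g v := by
      have := hg.2 (Set.mem_univ u₀) (Set.mem_univ v) (by linarith : (0:ℝ) ≤ 1 - t)
        ht0.le (by ring)
      rw [smul_eq_mul, smul_eq_mul] at this
      have harg : (1 - t) • u₀ + t • v = u₀ + t • (v - u₀) := by module
      rwa [harg] at this
    rw [← mul_le_mul_iff_right₀ ht0]
    nlinarith
  refine le_of_forall_pos_le_add ?_
  intro ε hε
  have := key (ε / ‖v - u₀‖) (by positivity)
  rw [div_mul_eq_mul_div, mul_div_assoc, div_self (ne_of_gt hvpos), mul_one] at this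
  linarith

/-- density of common differentiability points of two Lipschitz functions. -/
lemma aux_diff_dense {K₁ K₂ : NNReal} {g₁ g₂ : Euc k → ℝ}
    (h₁ : LipschitzWith K₁ g₁) (h₂ : LipschitzWith K₂ g₂) (u₀ : Euc k) {δ : ℝ} (hδ : 0 < δ) :
    ∃ u, ‖u - u₀‖ < δ ∧ DifferentiableAt ℝ g₁ u ∧ DifferentiableAt ℝ g₂ u := by
  by_contra hcon
  push_neg at hcon
  have hsub : Metric.ball u₀ δ ⊆
      {u | ¬ DifferentiableAt ℝ g₁ u} ∪ {u | ¬ DifferentiableAt ℝ g₂ u} := by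
    intro u hu
    rw [Metric.mem_ball, dist_eq_norm] at hu
    by_contra hu2
    simp only [Set.mem_union, Set.mem_setOf_eq, not_or, not_not] at hu2
    exact hcon u hu hu2.1 hu2.2
  have hm1 : volume {u : Euc k | ¬ DifferentiableAt ℝ g₁ u} = 0 := h₁.ae_differentiableAt
  have hm2 : volume {u : Euc k | ¬ DifferentiableAt ℝ g₂ u} = 0 := h₂.ae_differentiableAt
  have hball : (0 : ENNReal) < volume (Metric.ball u₀ δ) :=
    Metric.measure_ball_pos volume u₀ hδ
  have h0 : volume (Metric.ball u₀ δ) = 0 := by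
    refine le_antisymm ?_ (by simp)
    calc volume (Metric.ball u₀ δ)
        ≤ volume ({u : Euc k | ¬ DifferentiableAt ℝ g₁ u} ∪
            {u | ¬ DifferentiableAt ℝ g₂ u}) := measure_mono hsub
      _ ≤ volume {u : Euc k | ¬ DifferentiableAt ℝ g₁ u} +
            volume {u : Euc k | ¬ DifferentiableAt ℝ g₂ u} := measure_union_le _ _
      _ = 0 := by rw [hm1, hm2, add_zero]
  rw [h0] at hball
  exact lt_irrefl _ hball

lemma aux_gradient_inner (g : Euc k → ℝ) (u w : Euc k) :
    ⟪gradient g u, w⟫ = fderiv ℝ g u w := by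
  rw [gradient, InnerProductSpace.toDual_symm_apply]

/-- gradient formula for `h`. -/
lemma aux_hasGradientAt_h (j : Fin (d+1)) (g₁ g₂ : Euc d → ℝ) (h : Euc (d+1) → ℝ)
    (hh : ∀ x, h x = x j + g₁ (dropCoord j x) - g₂ (dropCoord j x))
    (x : Euc (d+1)) (hd₁ : DifferentiableAt ℝ g₁ (dropCoord j x))
    (hd₂ : DifferentiableAt ℝ g₂ (dropCoord j x)) :
    HasGradientAt h
      (insN j 1 (gradient g₁ (dropCoord j x) - gradient g₂ (dropCoord j x))) x := by
  set u := dropCoord j x with hu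
  set L : Euc (d+1) →L[ℝ] ℝ :=
    EuclideanSpace.proj j + (fderiv ℝ g₁ u - fderiv ℝ g₂ u).comp (dropL j) with hL
  have hF : HasFDerivAt h L x := by
    have h1 : HasFDerivAt (fun y : Euc (d+1) => y j)
        (EuclideanSpace.proj j : Euc (d+1) →L[ℝ] ℝ) x := by
      have h1' := (EuclideanSpace.proj j : Euc (d+1) →L[ℝ] ℝ).hasFDerivAt (x := x)
      exact h1'
    have h2 : HasFDerivAt (fun y : Euc (d+1) => g₁ (dropCoord j y))
        ((fderiv ℝ g₁ u).comp (dropL j)) x :=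
      hd₁.hasFDerivAt.comp x ((dropL j).hasFDerivAt : HasFDerivAt (dropL j) (dropL j) x)
    have h3 : HasFDerivAt (fun y : Euc (d+1) => g₂ (dropCoord j y))
        ((fderiv ℝ g₂ u).comp (dropL j)) x :=
      hd₂.hasFDerivAt.comp x ((dropL j).hasFDerivAt : HasFDerivAt (dropL j) (dropL j) x)
    have hsum : HasFDerivAt (fun y : Euc (d+1) => y j + g₁ (dropCoord j y) - g₂ (dropCoord j y))
        _ x := (h1.add h2).sub h3
    have hfun : (fun y : Euc (d+1) => y j + g₁ (dropCoord j y) - g₂ (dropCoord j y)) = h := by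
      funext y; rw [hh y]
    rw [hfun] at hsum
    refine hsum.congr_fderiv ?_
    rw [hL]
    ext v
    simp [ContinuousLinearMap.sub_apply, ContinuousLinearMap.add_apply,
      ContinuousLinearMap.comp_apply]
    ring
  have hid : (InnerProductSpace.toDual ℝ (Euc (d+1)))
      (insN j 1 (gradient g₁ u - gradient g₂ u)) = L := by
    apply ContinuousLinearMap.ext
    intro v
    rw [InnerProductSpace.toDual_apply_apply, aux_inner_split j, insN_apply_same]
    have hdrop : dropCoord j (insN j 1 (gradient g₁ u - gradient g₂ u) : Euc (d+1))
        = gradient g₁ u - gradient g₂ u := aux_dropCoord_insertNth j _ _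
    rw [hdrop, inner_sub_left, aux_gradient_inner, aux_gradient_inner]
    simp [hL, ContinuousLinearMap.sub_apply, ContinuousLinearMap.add_apply,
      ContinuousLinearMap.comp_apply, dropL_apply]
  rw [hasGradientAt_iff_hasFDerivAt, hid]
  exact hF

/-- differentiability of `h ∘ S` on `H` yields `S`-regular normal vectors. -/
lemma aux_regnormal (S : Matrix (Fin (d+1)) (Fin (d+1)) ℝ)
    (h : Euc (d+1) → ℝ) (H : Set (Euc (d+1)))
    (hHiff : ∀ y, y ∈ H ↔ h (matVec S y) = 0)
    (x₀ : Euc (d+1)) (hx₀ : x₀ ∈ H) (W : Euc (d+1))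
    (hW : HasFDerivAt h ((InnerProductSpace.toDual ℝ (Euc (d+1))) W) (matVec S x₀)) :
    SRegNormal S H x₀ W := by
  intro ε hε
  set c : ℝ := ‖mulL S‖ + 1 with hc
  have hc0 : 0 < c := by positivity
  obtain ⟨δ₁, hδ₁, hP⟩ := aux_hasFDerivAt_epsdelta hW (div_pos hε hc0)
  refine ⟨δ₁ / c, div_pos hδ₁ hc0, ?_⟩
  intro y hyH hyne hynorm
  have hmv : matVec S y - matVec S x₀ = mulL S (y - x₀) := by
    rw [map_sub]; rfl
  have hz : ‖matVec S y - matVec S x₀‖ ≤ c * ‖y - x₀‖ := by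
    rw [hmv]
    calc ‖mulL S (y - x₀)‖ ≤ ‖mulL S‖ * ‖y - x₀‖ := (mulL S).le_opNorm _
      _ ≤ c * ‖y - x₀‖ := by
          apply mul_le_mul_of_nonneg_right _ (norm_nonneg _)
          rw [hc]; linarith
  have hzlt : ‖matVec S y - matVec S x₀‖ < δ₁ := by
    calc ‖matVec S y - matVec S x₀‖ ≤ c * ‖y - x₀‖ := hz
      _ < c * (δ₁ / c) := by exact mul_lt_mul_of_pos_left hynorm hc0
      _ = δ₁ := by field_simp
  have hP2 := hP (matVec S y) hzlt
  have hy0 : h (matVec S y) = 0 := (hHiff y).mp hyH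
  have hx00 : h (matVec S x₀) = 0 := (hHiff x₀).mp hx₀
  rw [hy0, hx00, InnerProductSpace.toDual_apply_apply] at hP2
  have habs := abs_le.mp hP2
  have hSb : Sbil S W (y - x₀) = ⟪W, matVec S y - matVec S x₀⟫ := by
    rw [aux_Sbil_eq_inner]
    congr 1
    rw [hmv]; rfl
  rw [hSb]
  have hstep : ⟪W, matVec S y - matVec S x₀⟫ ≤ (ε/c) * ‖matVec S y - matVec S x₀‖ := by
    have := habs.1
    linarith
  calc ⟪W, matVec S y - matVec S x₀⟫ ≤ (ε/c) * ‖matVec S y - matVec S x₀‖ := hstep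
    _ ≤ (ε/c) * (c * ‖y - x₀‖) := by
        apply mul_le_mul_of_nonneg_left hz (le_of_lt (div_pos hε hc0))
    _ = ε * ‖y - x₀‖ := by field_simp

/-- Step 1: an `S`-regular normal with positive `j`-th component yields an approximate
Fréchet subgradient inequality for `φ`. -/
lemma aux_step1 {d : ℕ} (S : Matrix (Fin (d+1)) (Fin (d+1)) ℝ) (hinv : IsUnit S.det)
    (j : Fin (d+1)) (φ : Euc d → ℝ) {Kφ : ℝ} (hKφ : 0 ≤ Kφ)
    (hφab : ∀ u v, |φ u - φ v| ≤ Kφ * ‖u - v‖)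
    (h : Euc (d+1) → ℝ) (hhφ : ∀ z, h z = z j + φ (dropCoord j z))
    (H : Set (Euc (d+1))) (hHiff : ∀ y, y ∈ H ↔ h (matVec S y) = 0)
    (x₁ w₁ : Euc (d+1)) (hx₁ : x₁ ∈ H) (hreg : SRegNormal S H x₁ w₁) :
    ∀ ε > 0, ∃ δ > 0, ∀ u : Euc d, ‖u - dropCoord j (matVec S x₁)‖ < δ →
      ⟪dropCoord j w₁, u - dropCoord j (matVec S x₁)⟫
        - w₁ j * (φ u - φ (dropCoord j (matVec S x₁))) ≤ ε * ‖u - dropCoord j (matVec S x₁)‖ := by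
  intro ε hε
  set z₁ := matVec S x₁ with hz₁def
  set u₁ := dropCoord j z₁ with hu₁
  have hz₁0 : h z₁ = 0 := (hHiff x₁).mp hx₁
  have hz₁j : z₁ j = -φ u₁ := by
    have h1 := hhφ z₁
    rw [h1] at hz₁0
    linarith
  obtain ⟨c, hc⟩ : ∃ c : ℝ, c = ‖mulL S⁻¹‖ * (1 + Kφ) + 1 := ⟨_, rfl⟩
  have hm0 : 0 ≤ ‖mulL S⁻¹‖ * (1 + Kφ) := by positivity
  have hc0 : 0 < c := by rw [hc]; positivity
  obtain ⟨δ', hδ', hP⟩ := hreg (ε / c) (div_pos hε hc0)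
  refine ⟨δ' / c, div_pos hδ' hc0, ?_⟩
  intro u hu
  rcases eq_or_ne u u₁ with rfl | hne
  · simp
  have hupos : 0 < ‖u - u₁‖ := by rw [norm_pos_iff, sub_ne_zero]; exact hne
  set y := matVec S⁻¹ (insN j (-φ u) u) with hy
  have hSy : matVec S y = insN j (-φ u) u := aux_matVec_inv_right S hinv _
  have hyH : y ∈ H := (hHiff y).mpr (by
    rw [hSy, hhφ, insN_apply_same, aux_dropCoord_insertNth]; ring)
  have hyne : y ≠ x₁ := by
    intro he
    apply hne
    have h1 : matVec S y = z₁ := by rw [he]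
    rw [hSy] at h1
    have h2 := congrArg (dropCoord j) h1
    rwa [aux_dropCoord_insertNth] at h2
  have hWdiff : matVec S y - z₁ = insN j (φ u₁ - φ u) (u - u₁) := by
    rw [hSy]
    have hz₁eta : z₁ = insN j (-φ u₁) u₁ := by
      conv_lhs => rw [← aux_insertNth_eta j z₁]
      rw [hz₁j]
    rw [hz₁eta, aux_insertNth_sub]
    congr 1
    ring
  have hWnorm : ‖matVec S y - z₁‖ ≤ (1 + Kφ) * ‖u - u₁‖ := by
    rw [hWdiff]
    have h1 := aux_norm_le_add j (insN j (φ u₁ - φ u) (u - u₁))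
    rw [insN_apply_same, aux_dropCoord_insertNth] at h1
    have h2 : |φ u₁ - φ u| ≤ Kφ * ‖u - u₁‖ := by
      have h3 := hφab u₁ u
      rwa [norm_sub_rev] at h3
    nlinarith [norm_nonneg (u - u₁)]
  have hyx₁ : y - x₁ = matVec S⁻¹ (matVec S y - z₁) := by
    have hx₁inv : x₁ = matVec S⁻¹ z₁ := (aux_matVec_inv_left S hinv x₁).symm
    conv_lhs => rw [hy, hx₁inv]
    rw [← mulL_apply, ← mulL_apply, ← map_sub, ← hSy]
    rfl
  have hynorm : ‖y - x₁‖ ≤ ‖mulL S⁻¹‖ * ((1 + Kφ) * ‖u - u₁‖) := by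
    rw [hyx₁, ← mulL_apply]
    calc ‖mulL S⁻¹ (matVec S y - z₁)‖ ≤ ‖mulL S⁻¹‖ * ‖matVec S y - z₁‖ :=
          (mulL S⁻¹).le_opNorm _
      _ ≤ ‖mulL S⁻¹‖ * ((1 + Kφ) * ‖u - u₁‖) :=
          mul_le_mul_of_nonneg_left hWnorm (norm_nonneg _)
  have hexp : ‖mulL S⁻¹‖ * ((1 + Kφ) * ‖u - u₁‖) = c * ‖u - u₁‖ - ‖u - u₁‖ := by
    rw [hc]; ring
  have hcn : c * ‖u - u₁‖ < δ' := by
    have h2 : c * ‖u - u₁‖ < c * (δ' / c) := mul_lt_mul_of_pos_left hu hc0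
    have h3 : c * (δ' / c) = δ' := by field_simp
    linarith
  have hylt : ‖y - x₁‖ < δ' := by linarith
  have hP2 := hP y hyH hyne hylt
  have hSb : Sbil S w₁ (y - x₁) = ⟪w₁, matVec S y - z₁⟫ := by
    rw [aux_Sbil_eq_inner]
    congr 1
    rw [hyx₁]
    exact aux_matVec_inv_right S hinv _
  rw [hSb, hWdiff, aux_inner_split j, insN_apply_same, aux_dropCoord_insertNth] at hP2
  have hfinal : (ε/c) * ‖y - x₁‖ ≤ ε * ‖u - u₁‖ := by
    have h1 : ‖y - x₁‖ ≤ c * ‖u - u₁‖ := by linarith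
    calc (ε/c) * ‖y - x₁‖ ≤ (ε/c) * (c * ‖u - u₁‖) :=
          mul_le_mul_of_nonneg_left h1 (by positivity)
      _ = ε * ‖u - u₁‖ := by field_simp
  have hring : w₁ j * (φ u₁ - φ u) = -(w₁ j * (φ u - φ u₁)) := by ring
  rw [hring] at hP2
  linarith

end Stmt13Aux

/-- Lemma 7 of the paper. -/
theorem stmt13 {d : ℕ} (S : Matrix (Fin (d + 1)) (Fin (d + 1)) ℝ)
    (hsymm : S.IsSymm) (hinv : IsUnit S.det)
    (j : Fin (d + 1)) (C : Set (Euc (d + 1)))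
    (hC : IsCompact C) (hC1 : ∀ y ∈ C, y j = 1)
    (g₁ g₂ : Euc d → ℝ)
    (hg₁ : ConvexOn ℝ Set.univ g₁) (hg₂ : ConvexOn ℝ Set.univ g₂)
    (hl₁ : LinGrowth g₁) (hl₂ : LinGrowth g₂)
    (h : Euc (d + 1) → ℝ)
    (hh : ∀ x, h x = x j + g₁ (dropCoord j x) - g₂ (dropCoord j x))
    (H : Set (Euc (d + 1))) (hH : H = {x | h (matVec S x) = 0}) :
    (∀ x : Euc (d + 1), DifferentiableAt ℝ g₁ (dropCoord j x) →
        DifferentiableAt ℝ g₂ (dropCoord j x) → gradient h x ∈ C) ↔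
      ∀ x ∈ H, ∃ w ∈ C, SNormal S H x w := by
  obtain ⟨K₁, hK₁, hG₁⟩ := hl₁
  obtain ⟨K₂, hK₂, hG₂⟩ := hl₂
  have hab₁ : ∀ x y, |g₁ x - g₁ y| ≤ K₁ * ‖x - y‖ := aux_conv_lip_abs g₁ hg₁ hK₁ hG₁
  have hab₂ : ∀ x y, |g₂ x - g₂ y| ≤ K₂ * ‖x - y‖ := aux_conv_lip_abs g₂ hg₂ hK₂ hG₂
  have hlip₁ : LipschitzWith ⟨K₁, hK₁.le⟩ g₁ := aux_lipschitzWith g₁ hK₁ hab₁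
  have hlip₂ : LipschitzWith ⟨K₂, hK₂.le⟩ g₂ := aux_lipschitzWith g₂ hK₂ hab₂
  have hcont₁ : Continuous g₁ := hlip₁.continuous
  have hcont₂ : Continuous g₂ := hlip₂.continuous
  set φ : Euc d → ℝ := fun u => g₁ u - g₂ u with hφ
  have hKφ : (0:ℝ) ≤ K₁ + K₂ := by linarith
  have hφab : ∀ u v, |φ u - φ v| ≤ (K₁ + K₂) * ‖u - v‖ := by
    intro u v
    have h1 := hab₁ u v
    have h2 := hab₂ u v
    have h3 : φ u - φ v = (g₁ u - g₁ v) - (g₂ u - g₂ v) := by simp only [hφ]; ring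
    rw [h3]
    calc |(g₁ u - g₁ v) - (g₂ u - g₂ v)| ≤ |g₁ u - g₁ v| + |g₂ u - g₂ v| := abs_sub _ _
      _ ≤ (K₁ + K₂) * ‖u - v‖ := by linarith
  have hhφ : ∀ z : Euc (d+1), h z = z j + φ (dropCoord j z) := by
    intro z; rw [hh]; simp only [hφ]; ring
  have hmem : ∀ y : Euc (d+1), y ∈ H ↔ h (matVec S y) = 0 := by
    intro y; rw [hH]; exact Iff.rfl
  have hins : ∀ u : Euc d, h (insN j (-φ u) u) = 0 := by
    intro u
    rw [hhφ, insN_apply_same, aux_dropCoord_insertNth]; ring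
  have hzeta : ∀ z : Euc (d+1), h z = 0 →
      z = insN j (-φ (dropCoord j z)) (dropCoord j z) := by
    intro z hz
    have hzj : z j = -φ (dropCoord j z) := by
      have h1 := hhφ z
      rw [h1] at hz
      linarith
    conv_lhs => rw [← aux_insertNth_eta j z]
    rw [hzj]
  constructor
  · -- forward direction
    intro hL x hxH
    have hz0 : h (matVec S x) = 0 := (hmem x).mp hxH
    have hsel : ∀ n : ℕ, ∃ u : Euc d, ‖u - dropCoord j (matVec S x)‖ < 1/(n+1) ∧
        DifferentiableAt ℝ g₁ u ∧ DifferentiableAt ℝ g₂ u := by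
      intro n
      exact aux_diff_dense hlip₁ hlip₂ _ (by positivity)
    choose us hus hd1 hd2 using hsel
    set zs : ℕ → Euc (d+1) := fun n => insN j (-φ (us n)) (us n) with hzs
    have hzs0 : ∀ n, h (zs n) = 0 := fun n => hins (us n)
    set xs : ℕ → Euc (d+1) := fun n => matVec S⁻¹ (zs n) with hxsdef
    have hSxs : ∀ n, matVec S (xs n) = zs n := fun n => aux_matVec_inv_right S hinv (zs n)
    have hxsH : ∀ n, xs n ∈ H := fun n => (hmem (xs n)).mpr (by rw [hSxs]; exact hzs0 n)
    have hdrop_zs : ∀ n, dropCoord j (zs n) = us n := fun n => aux_dropCoord_insertNth j _ _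
    have hgrad : ∀ n, HasGradientAt h (gradient h (zs n)) (zs n) := by
      intro n
      have h1 := aux_hasGradientAt_h j g₁ g₂ h hh (zs n)
        (by rw [hdrop_zs]; exact hd1 n) (by rw [hdrop_zs]; exact hd2 n)
      exact h1.differentiableAt.hasGradientAt
    have hgradC : ∀ n, gradient h (zs n) ∈ C := by
      intro n
      exact hL (zs n) (by rw [hdrop_zs]; exact hd1 n) (by rw [hdrop_zs]; exact hd2 n)
    have hreg : ∀ n, SRegNormal S H (xs n) (gradient h (zs n)) := by
      intro n
      apply aux_regnormal S h H hmem (xs n) (hxsH n)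
      rw [hSxs]
      exact (hgrad n).hasFDerivAt
    have huslim : Tendsto (fun n => ‖us n - dropCoord j (matVec S x)‖) atTop (𝓝 0) := by
      apply squeeze_zero (fun n => norm_nonneg _) (fun n => (hus n).le)
      exact tendsto_one_div_add_atTop_nhds_zero_nat
    have hzlim : Tendsto zs atTop (𝓝 (matVec S x)) := by
      rw [tendsto_iff_norm_sub_tendsto_zero]
      apply squeeze_zero (fun n => norm_nonneg _)
        (g := fun n => (1 + (K₁ + K₂)) * ‖us n - dropCoord j (matVec S x)‖)
      · intro n
        have hzeq := hzeta (matVec S x) hz0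
        have hzsn : zs n = insN j (-φ (us n)) (us n) := rfl
        conv_lhs => rw [hzsn, hzeq, aux_insertNth_sub]
        have h1 := aux_norm_le_add j
          (insN j (-φ (us n) - -φ (dropCoord j (matVec S x)))
            (us n - dropCoord j (matVec S x)))
        rw [insN_apply_same, aux_dropCoord_insertNth] at h1
        have h2 : |(-φ (us n) - -φ (dropCoord j (matVec S x)))|
            = |φ (us n) - φ (dropCoord j (matVec S x))| := by
          rw [show (-φ (us n) - -φ (dropCoord j (matVec S x)))
            = -(φ (us n) - φ (dropCoord j (matVec S x))) by ring, abs_neg]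
        rw [h2] at h1
        have h3 := hφab (us n) (dropCoord j (matVec S x))
        nlinarith [norm_nonneg (us n - dropCoord j (matVec S x))]
      · have := huslim.const_mul (1 + (K₁ + K₂))
        simpa using this
    have hxlim : Tendsto xs atTop (𝓝 x) := by
      have hx_eq : x = matVec S⁻¹ (matVec S x) := (aux_matVec_inv_left S hinv x).symm
      rw [hx_eq]
      have hcontS : Continuous (matVec S⁻¹ : Euc (d+1) → Euc (d+1)) := (mulL S⁻¹).continuous
      exact (hcontS.tendsto (matVec S x)).comp hzlim
    obtain ⟨w, hwC, ψ, hψ, hψlim⟩ := hC.tendsto_subseq hgradC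
    refine ⟨w, hwC, fun n => xs (ψ n), fun n => gradient h (zs (ψ n)),
      fun n => ⟨hxsH _, hreg _⟩, ?_, hψlim⟩
    exact hxlim.comp hψ.tendsto_atTop
  · -- backward direction
    intro hR x hd₁ hd₂
    set u₀ : Euc d := dropCoord j x with hu₀
    set z₀ : Euc (d+1) := insN j (-φ u₀) u₀ with hz₀
    set x₀ : Euc (d+1) := matVec S⁻¹ z₀ with hx₀def
    have hSx₀ : matVec S x₀ = z₀ := aux_matVec_inv_right S hinv z₀
    have hx₀H : x₀ ∈ H := (hmem x₀).mpr (by rw [hSx₀]; exact hins u₀)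
    obtain ⟨w, hwC, xs, ws, hprop, hxs, hws⟩ := hR x₀ hx₀H
    have hwj : w j = 1 := hC1 w hwC
    have hβlim : Tendsto (fun n => ws n j) atTop (𝓝 1) := by
      have hcj : Continuous (fun y : Euc (d+1) => y j) :=
        (EuclideanSpace.proj j : Euc (d+1) →L[ℝ] ℝ).continuous
      have h1 := (hcj.tendsto w).comp hws
      rwa [hwj] at h1
    have hev : ∀ᶠ n in atTop, (1:ℝ)/2 < ws n j :=
      hβlim.eventually (eventually_gt_nhds (by norm_num))
    obtain ⟨N, hN⟩ := eventually_atTop.mp hev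
    set xs' : ℕ → Euc (d+1) := fun n => xs (n + N) with hxs'def
    set ws' : ℕ → Euc (d+1) := fun n => ws (n + N) with hws'def
    have hxs' : Tendsto xs' atTop (𝓝 x₀) := hxs.comp (tendsto_add_atTop_nat N)
    have hws' : Tendsto ws' atTop (𝓝 w) := hws.comp (tendsto_add_atTop_nat N)
    have hβ' : ∀ n, (1:ℝ)/2 < ws' n j := fun n => hN (n + N) (by omega)
    have hH' : ∀ n, xs' n ∈ H := fun n => (hprop (n + N)).1
    have hreg' : ∀ n, SRegNormal S H (xs' n) (ws' n) := fun n => (hprop (n + N)).2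
    set un : ℕ → Euc d := fun n => dropCoord j (matVec S (xs' n)) with hun
    set pn : ℕ → Euc d := fun n => dropCoord j (ws' n) with hpn
    set βn : ℕ → ℝ := fun n => ws' n j with hβn
    have hβpos : ∀ n, 0 < βn n := fun n => lt_trans (by norm_num) (hβ' n)
    have hfre : ∀ n, ∀ ε > 0, ∃ δ > 0, ∀ u : Euc d, ‖u - un n‖ < δ →
        ⟪pn n, u - un n⟫ - βn n * (φ u - φ (un n)) ≤ ε * ‖u - un n‖ := fun n =>
      aux_step1 S hinv j φ hKφ hφab h hhφ H hmem (xs' n) (ws' n) (hH' n) (hreg' n)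
    set rs : ℕ → Euc d := fun n => (βn n)⁻¹ • pn n with hrs
    have hrsub : ∀ n, ∀ ε > 0, ∃ δ > 0, ∀ u : Euc d, ‖u - un n‖ < δ →
        ⟪rs n, u - un n⟫ - ε * ‖u - un n‖ ≤ φ u - φ (un n) := by
      intro n ε hε
      obtain ⟨δ, hδ, hp⟩ := hfre n (ε * βn n) (mul_pos hε (hβpos n))
      refine ⟨δ, hδ, fun u hu => ?_⟩
      have h1 := hp u hu
      have hexp : (βn n) * (⟪rs n, u - un n⟫ - ε * ‖u - un n‖)
          = ⟪pn n, u - un n⟫ - ε * βn n * ‖u - un n‖ := by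
        rw [hrs]
        simp only [real_inner_smul_left]
        rw [mul_sub, ← mul_assoc, mul_inv_cancel₀ (ne_of_gt (hβpos n)), one_mul]
        ring
      have hgoal : (βn n) * (⟪rs n, u - un n⟫ - ε * ‖u - un n‖)
          ≤ (βn n) * (φ u - φ (un n)) := by
        rw [hexp]
        nlinarith [h1]
      exact le_of_mul_le_mul_left hgoal (hβpos n)
    have hqex : ∀ n, ∃ q : Euc d, ∀ v, g₂ (un n) + ⟪q, v - un n⟫ ≤ g₂ v :=
      fun n => aux_subgrad_exists g₂ hg₂ hcont₂ (un n)
    choose qs hqs using hqex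
    set ss : ℕ → Euc d := fun n => rs n + qs n with hss
    have hssub : ∀ n, ∀ v, g₁ (un n) + ⟪ss n, v - un n⟫ ≤ g₁ v := by
      intro n
      apply aux_fre_to_global g₁ hg₁ (un n) (ss n)
      intro ε hε
      obtain ⟨δ, hδ, hp⟩ := hrsub n ε hε
      refine ⟨δ, hδ, fun u hu => ?_⟩
      have h1 := hp u hu
      have h2 := hqs n u
      have h3 : ss n = rs n + qs n := rfl
      rw [h3, inner_add_left]
      have hφeq : φ u - φ (un n) = (g₁ u - g₁ (un n)) - (g₂ u - g₂ (un n)) := by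
        simp only [hφ]; ring
      rw [hφeq] at h1
      linarith
    have hqbound : ∀ n, ‖qs n‖ ≤ K₂ :=
      fun n => aux_subgrad_bound g₂ hK₂ hG₂ (un n) (qs n) (hqs n)
    have hsbound : ∀ n, ‖ss n‖ ≤ K₁ :=
      fun n => aux_subgrad_bound g₁ hK₁ hG₁ (un n) (ss n) (hssub n)
    have hu₀eq : dropCoord j (matVec S x₀) = u₀ := by
      rw [hSx₀, hz₀]
      exact aux_dropCoord_insertNth j _ _
    have hulim : Tendsto un atTop (𝓝 u₀) := by
      have hcd : Continuous (fun y : Euc (d+1) => dropCoord j (matVec S y)) :=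
        ((dropL j).continuous).comp (mulL S).continuous
      have h1 := (hcd.tendsto x₀).comp hxs'
      rw [hu₀eq] at h1
      exact h1
    have hsmem : ∀ n, ss n ∈ Metric.closedBall (0 : Euc d) K₁ := by
      intro n; rw [Metric.mem_closedBall, dist_zero_right]; exact hsbound n
    obtain ⟨s, hsmem', ψ₁, hψ₁, hslim⟩ :=
      (isCompact_closedBall (0 : Euc d) K₁).tendsto_subseq hsmem
    have hqmem : ∀ n, qs (ψ₁ n) ∈ Metric.closedBall (0 : Euc d) K₂ := by
      intro n; rw [Metric.mem_closedBall, dist_zero_right]; exact hqbound _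
    obtain ⟨q, hqmem', ψ₂, hψ₂, hqlim⟩ :=
      (isCompact_closedBall (0 : Euc d) K₂).tendsto_subseq hqmem
    set θ : ℕ → ℕ := fun n => ψ₁ (ψ₂ n) with hθ
    have hθmono : StrictMono θ := hψ₁.comp hψ₂
    have hslimθ : Tendsto (fun n => ss (θ n)) atTop (𝓝 s) := hslim.comp hψ₂.tendsto_atTop
    have hqlimθ : Tendsto (fun n => qs (θ n)) atTop (𝓝 q) := hqlim
    have hulimθ : Tendsto (fun n => un (θ n)) atTop (𝓝 u₀) := hulim.comp hθmono.tendsto_atTop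
    have hsglob : ∀ v, g₁ u₀ + ⟪s, v - u₀⟫ ≤ g₁ v :=
      aux_subgrad_limit g₁ hcont₁ (fun n => un (θ n)) (fun n => ss (θ n)) u₀ s
        hulimθ hslimθ (fun n => hssub (θ n))
    have hqglob : ∀ v, g₂ u₀ + ⟪q, v - u₀⟫ ≤ g₂ v :=
      aux_subgrad_limit g₂ hcont₂ (fun n => un (θ n)) (fun n => qs (θ n)) u₀ q
        hulimθ hqlimθ (fun n => hqs (θ n))
    have hseq : s = gradient g₁ u₀ := aux_subgrad_eq_grad g₁ u₀ hd₁ s hsglob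
    have hqeq : q = gradient g₂ u₀ := aux_subgrad_eq_grad g₂ u₀ hd₂ q hqglob
    have hplim : Tendsto pn atTop (𝓝 (dropCoord j w)) :=
      ((dropL j).continuous.tendsto w).comp hws'
    have hβlim' : Tendsto βn atTop (𝓝 1) := hβlim.comp (tendsto_add_atTop_nat N)
    have hrlim : Tendsto rs atTop (𝓝 (dropCoord j w)) := by
      have h1 : Tendsto (fun n => (βn n)⁻¹) atTop (𝓝 ((1:ℝ)⁻¹)) :=
        hβlim'.inv₀ (by norm_num)
      have h2 := h1.smul hplim
      simpa using h2
    have hrlimθ : Tendsto (fun n => rs (θ n)) atTop (𝓝 (dropCoord j w)) :=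
      hrlim.comp hθmono.tendsto_atTop
    have hrlim2 : Tendsto (fun n => rs (θ n)) atTop (𝓝 (s - q)) := by
      have h1 : (fun n => rs (θ n)) = fun n => ss (θ n) - qs (θ n) := by
        funext n
        rw [hss]
        simp
      rw [h1]
      exact hslimθ.sub hqlimθ
    have hdw : dropCoord j w = s - q := tendsto_nhds_unique hrlimθ hrlim2
    have hgrad := aux_hasGradientAt_h j g₁ g₂ h hh x hd₁ hd₂
    have hgradeq : gradient h x
        = insN j 1 (gradient g₁ u₀ - gradient g₂ u₀) := hgrad.gradient
    rw [hgradeq]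
    have hweq : (insN j 1 (gradient g₁ u₀ - gradient g₂ u₀) : Euc (d+1)) = w := by
      have h1 : gradient g₁ u₀ - gradient g₂ u₀ = dropCoord j w := by
        rw [hdw, hseq, hqeq]
      rw [h1, ← hwj]
      exact aux_insertNth_eta j w
    rw [hweq]
    exact hwC


end
end

section
/- Let 1 ≤ m ≤ d and let Λ be the canonical bilinear form on ℝ^d, Λ(x,y) = Σ_{i=1}^m x^i y^i − Σ_{i=m+1}^d x^i y^i. A closed set G ⊂ ℝ^d is Λ-monotone (i.e., Λ(x−y, x−y) ≥ 0 for all x, y ∈ G) if and only if G = {(u, f(u)) : u ∈ D} is the graph of a 1-Lipschitz function f : D → ℝ^{d−m}, i.e., |f(u) − f(v)| ≤ |u − v| for u, v ∈ D, where D is a closed set in ℝ^m. Moreover, G is maximal Λ-monotone (not properly contained in another Λ-monotone set) if and only if D = ℝ^m. -/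
open Filter Topology Set Pointwise
open scoped RealInnerProductSpace

noncomputable section

lemma sq_le_helper {a b : ℝ} (hb : 0 ≤ b) (h : a^2 ≤ b^2) : a ≤ b := by nlinarith

set_option maxHeartbeats 2000000 in
lemma kir_finite {m k : ℕ} {ι : Type} (t : Finset ι) (w : ι → Euc m) (y : ι → Euc k)
    (u : Euc m) (hu : ∀ i ∈ t, u ≠ w i)
    (hlip : ∀ i ∈ t, ∀ j ∈ t, ‖y i - y j‖ ≤ ‖w i - w j‖) :
    ∃ v : Euc k, ∀ i ∈ t, ‖v - y i‖ ≤ ‖u - w i‖ := by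
  classical
  rcases t.eq_empty_or_nonempty with rfl | ht
  · exact ⟨0, by simp⟩
  set r : ι → ℝ := fun i => ‖u - w i‖ with hr
  have hrpos : ∀ i ∈ t, 0 < r i := fun i hi =>
    norm_pos_iff.mpr (sub_ne_zero.mpr (hu i hi))
  set S : Set (Euc k) := convexHull ℝ (↑(t.image y)) with hS
  have hScpt : IsCompact S := (t.image y).finite_toSet.isCompact_convexHull ℝ
  have hSne : S.Nonempty := by
    rw [hS, convexHull_nonempty_iff]
    exact Finset.coe_nonempty.mpr (ht.image y)
  set φ : Euc k → ℝ := fun v => t.sup' ht (fun i => ‖v - y i‖ / r i) with hφ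
  have hφc : Continuous φ := by
    rw [hφ]
    exact Continuous.finset_sup'_apply (f := fun i v => ‖v - y i‖ / r i) ht
      fun i _ => ((continuous_id.sub continuous_const).norm).div_const _
  obtain ⟨v, hvS, hmin⟩ := hScpt.exists_isMinOn hSne hφc.continuousOn
  set lam : ℝ := φ v with hlam
  by_cases hlam1 : lam ≤ 1
  · refine ⟨v, fun i hi => ?_⟩
    have h1 : ‖v - y i‖ / r i ≤ lam := Finset.le_sup' (fun i => ‖v - y i‖ / r i) hi
    exact (div_le_one (hrpos i hi)).mp (h1.trans hlam1)
  push_neg at hlam1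
  exfalso
  -- active set
  set I : Finset ι := t.filter (fun i => ‖v - y i‖ = lam * r i) with hI
  have hIt : I ⊆ t := Finset.filter_subset _ _
  have hIne : I.Nonempty := by
    obtain ⟨i, hit, hieq⟩ := Finset.exists_mem_eq_sup' ht (fun i => ‖v - y i‖ / r i)
    refine ⟨i, Finset.mem_filter.mpr ⟨hit, ?_⟩⟩
    have h2 : lam = ‖v - y i‖ / r i := hieq
    rw [eq_div_iff (hrpos i hit).ne'] at h2
    exact h2.symm
  have hact : ∀ i ∈ I, ‖v - y i‖ = lam * r i := fun i hi => (Finset.mem_filter.mp hi).2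
  have hratio : ∀ i ∈ t, ‖v - y i‖ ≤ lam * r i := by
    intro i hi
    have h1 : ‖v - y i‖ / r i ≤ lam := Finset.le_sup' (fun i => ‖v - y i‖ / r i) hi
    rw [div_le_iff₀ (hrpos i hi)] at h1
    linarith [h1]
  set J : Finset (Euc k) := I.image y with hJ
  have hJne : J.Nonempty := hIne.image y
  set T : Set (Euc k) := convexHull ℝ (↑J) with hT
  have hTS : T ⊆ S := convexHull_mono
    (Finset.coe_subset.mpr (Finset.image_subset_image hIt))
  have hTcpt : IsCompact T := J.finite_toSet.isCompact_convexHull ℝ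
  have hTne : T.Nonempty := by
    rw [hT, convexHull_nonempty_iff]; exact Finset.coe_nonempty.mpr hJne
  have hJT : ∀ z ∈ J, (z : Euc k) ∈ T := fun z hz =>
    subset_convexHull ℝ _ (Finset.mem_coe.mpr hz)
  -- main claim : v ∈ T
  have hvT : v ∈ T := by
    by_contra hvT
    obtain ⟨p, hpT, hpmin⟩ := hTcpt.exists_isMinOn hTne
      (Continuous.continuousOn (f := fun q => ‖v - q‖)
        ((continuous_const.sub continuous_id).norm))
    have hpv : p ≠ v := fun h => hvT (h ▸ hpT)
    set e : Euc k := p - v with he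
    have hepos : 0 < ‖e‖ := norm_pos_iff.mpr (sub_ne_zero.mpr hpv)
    -- variational inequality
    have hvar : ∀ q ∈ T, ⟪v - p, q - p⟫ ≤ 0 := by
      intro q hq
      have key : ∀ s : ℝ, 0 < s → s ≤ 1 →
          2 * s * ⟪v - p, q - p⟫ ≤ s^2 * ‖q - p‖^2 := by
        intro s hs0 hs1
        have hmem : p + s • (q - p) ∈ T := by
          have h := (convex_convexHull ℝ (↑J : Set (Euc k))) hpT hq
            (by linarith : (0:ℝ) ≤ 1 - s) hs0.le (by ring)
          rw [hT]
          convert h using 1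
          module
        have h1 : ‖v - p‖ ≤ ‖v - (p + s • (q - p))‖ := hpmin hmem
        have h2 : ‖v - (p + s • (q - p))‖^2
            = ‖v - p‖^2 - 2 * (s * ⟪v - p, q - p⟫) + s^2 * ‖q - p‖^2 := by
          have h3 := norm_sub_sq_real (v - p) (s • (q - p))
          rw [show v - p - s • (q - p) = v - (p + s • (q - p)) by module,
            real_inner_smul_right, norm_smul] at h3
          rw [h3]
          simp only [Real.norm_eq_abs, mul_pow, sq_abs]
        nlinarith [pow_le_pow_left₀ (norm_nonneg (v - p)) h1 2]
      by_contra hpos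
      push_neg at hpos
      set A : ℝ := ⟪v - p, q - p⟫ with hA
      set c : ℝ := ‖q - p‖^2 with hc
      have hc0 : 0 ≤ c := sq_nonneg _
      set s : ℝ := min 1 (A / (c + 1)) with hs
      have hs0 : 0 < s := lt_min one_pos (div_pos hpos (by linarith))
      have hs1 : s ≤ 1 := min_le_left _ _
      have hkey := key s hs0 hs1
      have hsle : s * (c + 1) ≤ A := by
        have := min_le_right 1 (A / (c + 1))
        rw [← le_div_iff₀ (by linarith : (0:ℝ) < c + 1)]
        exact this
      nlinarith [mul_pos hs0 hpos, sq_nonneg s, mul_le_mul_of_nonneg_left hsle hs0.le]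
    -- for z in J : inner bound
    have hiz : ∀ z ∈ J, ‖e‖^2 ≤ ⟪z - v, e⟫ := by
      intro z hz
      have h5 : ⟪z - v, e⟫ = -⟪v - p, z - p⟫ + ‖e‖^2 := by
        rw [show z - v = (z - p) + e by rw [he]; abel, inner_add_left]
        congr 1
        · rw [he, show p - v = -(v - p) by abel, inner_neg_right, real_inner_comm]
        · exact real_inner_self_eq_norm_sq e
      have h6 := hvar z (hJT z hz)
      rw [h5]
      linarith
    -- active constraints strictly decrease along e for all s in (0,1]
    have hA : ∀ s ∈ Set.Ioc (0:ℝ) 1, ∀ i ∈ I, ‖(v + s • e) - y i‖ < lam * r i := by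
      intro s hs i hi
      have hyJ : y i ∈ J := Finset.mem_image_of_mem y hi
      have h1 := norm_add_sq_real (v - y i) (s • e)
      rw [show v - y i + s • e = (v + s • e) - y i by abel,
        real_inner_smul_right, norm_smul] at h1
      have h2 : ⟪v - y i, e⟫ ≤ -‖e‖^2 := by
        have := hiz (y i) hyJ
        have h3 : ⟪v - y i, e⟫ = -⟪y i - v, e⟫ := by
          rw [show v - y i = -(y i - v) by abel, inner_neg_left]
        linarith [h3, this]
      have he2 : 0 < ‖e‖^2 := pow_pos hepos 2
      have h4 : ‖(v + s • e) - y i‖^2 < (lam * r i)^2 := by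
        have hvy : ‖v - y i‖ = lam * r i := hact i hi
        rw [h1, Real.norm_eq_abs, mul_pow, sq_abs, hvy]
        have hse : s * ⟪v - y i, e⟫ ≤ - (s * ‖e‖^2) := by nlinarith [hs.1, h2]
        have hs2 : s^2 ≤ s := by nlinarith [hs.1, hs.2]
        have h7 : s^2 * ‖e‖^2 ≤ s * ‖e‖^2 := mul_le_mul_of_nonneg_right hs2 he2.le
        have h8 : 0 < s * ‖e‖^2 := mul_pos hs.1 he2
        linarith
      have hlr : 0 ≤ lam * r i :=
        le_of_lt (mul_pos (lt_trans one_pos hlam1) (hrpos i (hIt hi)))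
      exact lt_of_pow_lt_pow_left₀ 2 hlr h4
    -- eventual strict decrease for all constraints
    have hev : ∀ᶠ s in 𝓝[>] (0:ℝ),
        s ∈ Set.Ioc (0:ℝ) 1 ∧ ∀ i ∈ t, ‖(v + s • e) - y i‖ < lam * r i := by
      have hIoc : ∀ᶠ s in 𝓝[>] (0:ℝ), s ∈ Set.Ioc (0:ℝ) 1 :=
        Filter.eventually_of_mem (Ioc_mem_nhdsGT_of_mem ⟨le_refl 0, zero_lt_one⟩)
          (fun s hs => hs)
      refine hIoc.and ?_
      rw [Filter.eventually_all_finset]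
      intro i hi
      by_cases hiI : i ∈ I
      · exact hIoc.mono (fun s hs => hA s hs i hiI)
      · have hstrict : ‖v - y i‖ < lam * r i := by
          rcases lt_or_eq_of_le (hratio i hi) with h | h
          · exact h
          · exact absurd (Finset.mem_filter.mpr ⟨hi, h⟩) hiI
        have hcont : Tendsto (fun s : ℝ => ‖(v + s • e) - y i‖) (𝓝[>] (0:ℝ))
            (𝓝 ‖v - y i‖) := by
          have : Continuous (fun s : ℝ => ‖(v + s • e) - y i‖) :=
            (((continuous_const.add (continuous_id.smul continuous_const)).sub
              continuous_const).norm)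
          have h0 := this.tendsto 0
          simp only [zero_smul, add_zero] at h0
          exact h0.mono_left nhdsWithin_le_nhds
        exact hcont.eventually_lt_const hstrict
      -- end
    obtain ⟨s, hs01, hlt⟩ := hev.exists
    have hvs : v + s • e ∈ S := by
      have h := (convex_convexHull ℝ (↑(t.image y) : Set (Euc k))) hvS (hTS hpT)
        (by linarith [hs01.2] : (0:ℝ) ≤ 1 - s) hs01.1.le (by ring)
      rw [hS]
      convert h using 1
      rw [he]; module
    have hphi : φ (v + s • e) < lam := by
      rw [hφ]
      rw [Finset.sup'_lt_iff]
      intro i hi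
      rw [div_lt_iff₀ (hrpos i hi)]
      exact hlt i hi
    exact absurd (hmin hvs) (not_le.mpr hphi)
  -- extract convex weights
  rw [hT, Finset.convexHull_eq] at hvT
  obtain ⟨W, hW0, hW1, hWc⟩ := hvT
  rw [Finset.centerMass_eq_of_sum_1 _ _ hW1] at hWc
  simp only [id] at hWc
  have hrep : ∀ z, z ∈ J → ∃ i, i ∈ I ∧ y i = z := by
    intro z hz
    simpa using Finset.mem_image.mp hz
  have hne : Nonempty ι := ⟨ht.choose⟩
  choose! c hcI hcy using hrep
  set ρ : Euc k → ℝ := fun z => r (c z) with hρ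
  have hρpos : ∀ z ∈ J, 0 < ρ z := fun z hz => hrpos _ (hIt (hcI z hz))
  have hFz : ∀ z ∈ J, ‖z - v‖ = lam * ρ z := by
    intro z hz
    have h := hact _ (hcI z hz)
    rw [hcy z hz] at h
    rw [norm_sub_rev]
    exact h
  -- key pointwise bound
  have hkey : ∀ z ∈ J, ∀ z' ∈ J,
      (lam^2 - 1) * (ρ z^2 + ρ z'^2) / 2 + ⟪u - w (c z), u - w (c z')⟫
        ≤ ⟪z - v, z' - v⟫ := by
    intro z hz z' hz'
    have e1 := norm_sub_sq_real (z - v) (z' - v)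
    rw [show z - v - (z' - v) = z - z' by abel] at e1
    have e2 : ‖z - z'‖ ≤ ‖w (c z) - w (c z')‖ := by
      have h := hlip (c z) (hIt (hcI z hz)) (c z') (hIt (hcI z' hz'))
      rwa [hcy z hz, hcy z' hz'] at h
    have e4 : ‖z - z'‖^2 ≤ ‖w (c z) - w (c z')‖^2 :=
      pow_le_pow_left₀ (norm_nonneg _) e2 2
    have e3 := norm_sub_sq_real (u - w (c z)) (u - w (c z'))
    rw [show u - w (c z) - (u - w (c z')) = w (c z') - w (c z) by abel,
      norm_sub_rev] at e3
    have a1 : ‖z - v‖^2 = lam^2 * ρ z^2 := by rw [hFz z hz]; ring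
    have a2 : ‖z' - v‖^2 = lam^2 * ρ z'^2 := by rw [hFz z' hz']; ring
    have b1 : ‖u - w (c z)‖ = ρ z := rfl
    have b2 : ‖u - w (c z')‖ = ρ z' := rfl
    rw [b1, b2] at e3
    linarith
  -- the centered sum vanishes
  have hsum0 : ∑ z ∈ J, W z • (z - v) = (0 : Euc k) := by
    have h : ∑ z ∈ J, W z • (z - v)
        = (∑ z ∈ J, W z • z) - (∑ z ∈ J, W z) • v := by
      rw [Finset.sum_smul, ← Finset.sum_sub_distrib]
      exact Finset.sum_congr rfl fun z _ => by rw [smul_sub]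
    rw [h, hWc, hW1, one_smul, sub_self]
  have hdd : ∑ z ∈ J, ∑ z' ∈ J, W z * W z' * ⟪z - v, z' - v⟫ = 0 := by
    have h0 : ⟪∑ z ∈ J, W z • (z - v), ∑ z' ∈ J, W z' • (z' - v)⟫ = (0:ℝ) := by
      rw [hsum0]
      exact inner_zero_left _
    rw [sum_inner] at h0
    simp_rw [inner_sum, real_inner_smul_left, real_inner_smul_right] at h0
    rw [← h0]
    exact Finset.sum_congr rfl fun z _ => Finset.sum_congr rfl fun z' _ => by ring
  have hGG : (0:ℝ) ≤ ∑ z ∈ J, ∑ z' ∈ J, W z * W z' * ⟪u - w (c z), u - w (c z')⟫ := by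
    have h0 : ⟪∑ z ∈ J, W z • (u - w (c z)), ∑ z' ∈ J, W z' • (u - w (c z'))⟫
        = ‖∑ z ∈ J, W z • (u - w (c z))‖^2 :=
      real_inner_self_eq_norm_sq _
    rw [sum_inner] at h0
    simp_rw [inner_sum, real_inner_smul_left, real_inner_smul_right] at h0
    have h1 : ∑ z ∈ J, ∑ z' ∈ J, W z * W z' * ⟪u - w (c z), u - w (c z')⟫
        = ‖∑ z ∈ J, W z • (u - w (c z))‖^2 := by
      rw [← h0]
      exact Finset.sum_congr rfl fun z _ => Finset.sum_congr rfl fun z' _ => by ring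
    rw [h1]
    exact sq_nonneg _
  -- combine
  have hmainineq : ∑ z ∈ J, ∑ z' ∈ J,
      W z * W z' * ((lam^2 - 1) * (ρ z^2 + ρ z'^2) / 2
        + ⟪u - w (c z), u - w (c z')⟫) ≤ 0 := by
    rw [← hdd]
    refine Finset.sum_le_sum fun z hz => Finset.sum_le_sum fun z' hz' => ?_
    exact mul_le_mul_of_nonneg_left (hkey z hz z' hz')
      (mul_nonneg (hW0 z hz) (hW0 z' hz'))
  have hsplit : ∑ z ∈ J, ∑ z' ∈ J,
      W z * W z' * ((lam^2 - 1) * (ρ z^2 + ρ z'^2) / 2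
        + ⟪u - w (c z), u - w (c z')⟫)
      = (∑ z ∈ J, ∑ z' ∈ J, W z * W z' * ((lam^2 - 1) * (ρ z^2 + ρ z'^2) / 2))
        + ∑ z ∈ J, ∑ z' ∈ J, W z * W z' * ⟪u - w (c z), u - w (c z')⟫ := by
    rw [← Finset.sum_add_distrib]
    refine Finset.sum_congr rfl fun z _ => ?_
    rw [← Finset.sum_add_distrib]
    exact Finset.sum_congr rfl fun z' _ => by ring
  have key1 : ∑ z ∈ J, ∑ z' ∈ J, (W z * ρ z^2) * W z' = ∑ z ∈ J, W z * ρ z^2 := by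
    rw [← Finset.sum_mul_sum, hW1, mul_one]
  have key2 : ∑ z ∈ J, ∑ z' ∈ J, W z * (W z' * ρ z'^2) = ∑ z ∈ J, W z * ρ z^2 := by
    rw [← Finset.sum_mul_sum, hW1, one_mul]
  have hAval : ∑ z ∈ J, ∑ z' ∈ J, W z * W z' * ((lam^2 - 1) * (ρ z^2 + ρ z'^2) / 2)
      = (lam^2 - 1) * ∑ z ∈ J, W z * ρ z^2 := by
    have h : ∑ z ∈ J, ∑ z' ∈ J, W z * W z' * ((lam^2 - 1) * (ρ z^2 + ρ z'^2) / 2)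
        = ∑ z ∈ J, ∑ z' ∈ J, ((lam^2 - 1)/2 * ((W z * ρ z^2) * W z')
            + (lam^2 - 1)/2 * (W z * (W z' * ρ z'^2))) :=
      Finset.sum_congr rfl fun z _ => Finset.sum_congr rfl fun z' _ => by ring
    rw [h]
    simp only [Finset.sum_add_distrib, ← Finset.mul_sum]
    rw [hW1]
    simp only [mul_one]
    rw [← Finset.sum_mul, hW1, one_mul]
    ring
  have hWpos : (0:ℝ) < ∑ z ∈ J, W z * ρ z^2 := by
    have hWne : ∑ z ∈ J, W z ≠ 0 := by rw [hW1]; norm_num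
    obtain ⟨z, hz, hWz⟩ := Finset.exists_ne_zero_of_sum_ne_zero hWne
    refine Finset.sum_pos' (fun z' hz' => mul_nonneg (hW0 z' hz') (sq_nonneg _))
      ⟨z, hz, ?_⟩
    exact mul_pos ((hW0 z hz).lt_of_ne (Ne.symm hWz)) (pow_pos (hρpos z hz) 2)
  have hfinal : (0:ℝ) < (lam^2 - 1) * ∑ z ∈ J, W z * ρ z^2 :=
    mul_pos (by nlinarith [hlam1]) hWpos
  rw [hsplit, hAval] at hmainineq
  linarith

lemma kir_point {m k : ℕ} (D : Set (Euc m)) (f : Euc m → Euc k) (u : Euc m)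
    (hu : u ∉ D) (hlip : ∀ a ∈ D, ∀ b ∈ D, ‖f a - f b‖ ≤ ‖a - b‖) :
    ∃ v : Euc k, ∀ x ∈ D, ‖v - f x‖ ≤ ‖u - x‖ := by
  classical
  rcases D.eq_empty_or_nonempty with rfl | ⟨w₀, hw₀⟩
  · exact ⟨0, by simp⟩
  have hK : IsCompact (Metric.closedBall (f w₀) ‖u - w₀‖) :=
    isCompact_closedBall _ _
  set Z : D → Set (Euc k) := fun x => Metric.closedBall (f x) ‖u - (x : Euc m)‖ with hZ
  have hZc : ∀ x : D, IsClosed (Z x) := fun x => Metric.isClosed_closedBall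
  have hne : (Metric.closedBall (f w₀) ‖u - w₀‖ ∩ ⋂ x : D, Z x).Nonempty := by
    by_contra hemp
    rw [Set.not_nonempty_iff_eq_empty] at hemp
    obtain ⟨t, ht⟩ := hK.elim_finite_subfamily_closed Z hZc hemp
    have hune : ∀ i : D, i ∈ (insert ⟨w₀, hw₀⟩ t : Finset D) → u ≠ (i : Euc m) := by
      intro i _ h
      exact hu (h ▸ i.2)
    have hlip' : ∀ i : D, i ∈ (insert ⟨w₀, hw₀⟩ t : Finset D) →
        ∀ j : D, j ∈ (insert ⟨w₀, hw₀⟩ t : Finset D) →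
        ‖f (i : Euc m) - f (j : Euc m)‖ ≤ ‖(i : Euc m) - (j : Euc m)‖ := by
      intro i _ j _
      exact hlip i i.2 j j.2
    obtain ⟨v, hv⟩ := kir_finite (ι := D) (insert ⟨w₀, hw₀⟩ t)
      (fun x : D => (x : Euc m)) (fun x : D => f (x : Euc m)) u hune hlip'
    have hvK : v ∈ Metric.closedBall (f w₀) ‖u - w₀‖ := by
      rw [Metric.mem_closedBall, dist_eq_norm]
      exact hv ⟨w₀, hw₀⟩ (Finset.mem_insert_self _ _)
    have hvZ : v ∈ ⋂ x ∈ t, Z x := by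
      rw [Set.mem_iInter₂]
      intro x hx
      rw [hZ, Metric.mem_closedBall, dist_eq_norm]
      exact hv x (Finset.mem_insert_of_mem hx)
    exact Set.eq_empty_iff_forall_notMem.mp ht v ⟨hvK, hvZ⟩
  obtain ⟨v, _, hvI⟩ := hne
  refine ⟨v, fun x hx => ?_⟩
  have h := Set.mem_iInter.mp hvI ⟨x, hx⟩
  rwa [hZ, Metric.mem_closedBall, dist_eq_norm] at h

lemma lam_eq {m k : ℕ} (p q : Euc m × Euc k) :
    Lam (p - q) (p - q) = ‖p.1 - q.1‖^2 - ‖p.2 - q.2‖^2 := by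
  simp only [Lam, Prod.fst_sub, Prod.snd_sub, real_inner_self_eq_norm_sq]

lemma graph_mono {m k : ℕ} {D : Set (Euc m)} {f : Euc m → Euc k}
    (hf : ∀ u ∈ D, ∀ v ∈ D, ‖f u - f v‖ ≤ ‖u - v‖)
    (p q : Euc m × Euc k) (hp1 : p.1 ∈ D) (hp2 : p.2 = f p.1)
    (hq1 : q.1 ∈ D) (hq2 : q.2 = f q.1) : 0 ≤ Lam (p - q) (p - q) := by
  rw [lam_eq, hp2, hq2]
  have h := hf p.1 hp1 q.1 hq1
  nlinarith [norm_nonneg (p.1 - q.1), norm_nonneg (f p.1 - f q.1)]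

lemma mono_to_graph {m k : ℕ} (G : Set (Euc m × Euc k)) (hG : IsClosed G)
    (hmono : ∀ p ∈ G, ∀ q ∈ G, 0 ≤ Lam (p - q) (p - q)) :
    ∃ (D : Set (Euc m)) (f : Euc m → Euc k), IsClosed D ∧
      (∀ u ∈ D, ∀ v ∈ D, ‖f u - f v‖ ≤ ‖u - v‖) ∧
      G = {p : Euc m × Euc k | p.1 ∈ D ∧ p.2 = f p.1} := by
  classical
  have hlip : ∀ p ∈ G, ∀ q ∈ G, ‖p.2 - q.2‖ ≤ ‖p.1 - q.1‖ := by
    intro p hp q hq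
    have h := hmono p hp q hq
    rw [lam_eq] at h
    exact sq_le_helper (norm_nonneg _) (by linarith)
  set D : Set (Euc m) := Prod.fst '' G with hD
  set f : Euc m → Euc k := fun u => if h : ∃ v, (u, v) ∈ G then h.choose else 0 with hf
  have hfG : ∀ u ∈ D, (u, f u) ∈ G := by
    intro u hu
    obtain ⟨p, hp, hp1⟩ := hu
    have hex : ∃ v, (u, v) ∈ G := ⟨p.2, by rwa [← hp1, Prod.mk.eta]⟩
    simp only [hf, dif_pos hex]
    exact hex.choose_spec
  have hlipD : ∀ u ∈ D, ∀ v ∈ D, ‖f u - f v‖ ≤ ‖u - v‖ := by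
    intro a ha b hb
    have h := hlip (a, f a) (hfG a ha) (b, f b) (hfG b hb)
    simpa using h
  have huniq : ∀ p ∈ G, p.2 = f p.1 := by
    intro p hp
    have h := hlip p hp (p.1, f p.1) (hfG p.1 ⟨p, hp, rfl⟩)
    simp only [sub_self, norm_zero] at h
    have h2 : ‖p.2 - f p.1‖ ≤ 0 := by simpa using h
    exact sub_eq_zero.mp (norm_le_zero_iff.mp h2)
  refine ⟨D, f, ?_, hlipD, ?_⟩
  · rw [← isSeqClosed_iff_isClosed]
    intro xs x hxs hx
    have hcs : CauchySeq xs := hx.cauchySeq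
    have hcs2 : CauchySeq (fun n => f (xs n)) := by
      rw [Metric.cauchySeq_iff] at hcs ⊢
      intro ε hε
      obtain ⟨N, hN⟩ := hcs ε hε
      refine ⟨N, fun a ha b hb => ?_⟩
      have h1 := hN a ha b hb
      rw [dist_eq_norm] at h1 ⊢
      exact lt_of_le_of_lt (hlipD _ (hxs a) _ (hxs b)) h1
    obtain ⟨v, hv⟩ := cauchySeq_tendsto_of_complete hcs2
    have hmem : (x, v) ∈ G :=
      hG.isSeqClosed (fun n => hfG _ (hxs n)) (hx.prodMk_nhds hv)
    exact ⟨(x, v), hmem, rfl⟩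
  · ext p
    constructor
    · intro hp
      exact ⟨⟨p, hp, rfl⟩, huniq p hp⟩
    · rintro ⟨h1, h2⟩
      have h := hfG p.1 h1
      rwa [← h2, Prod.mk.eta] at h

/-- Example 2 of the paper: `Λ`-monotone sets are graphs of `1`-Lipschitz
functions, and maximal ones are graphs of everywhere-defined `1`-Lipschitz
functions. -/
theorem stmt18 {m k : ℕ} (hm : 1 ≤ m)
    (G : Set (Euc m × Euc k)) (hG : IsClosed G) :
    ((∀ p ∈ G, ∀ q ∈ G, 0 ≤ Lam (p - q) (p - q)) ↔
      ∃ (D : Set (Euc m)) (f : Euc m → Euc k), IsClosed D ∧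
        (∀ u ∈ D, ∀ v ∈ D, ‖f u - f v‖ ≤ ‖u - v‖) ∧
        G = {p : Euc m × Euc k | p.1 ∈ D ∧ p.2 = f p.1}) ∧
    (((∀ p ∈ G, ∀ q ∈ G, 0 ≤ Lam (p - q) (p - q)) ∧
        ∀ G' : Set (Euc m × Euc k),
          (∀ p ∈ G', ∀ q ∈ G', 0 ≤ Lam (p - q) (p - q)) → G ⊆ G' → G' = G) ↔
      ∃ f : Euc m → Euc k, (∀ u v : Euc m, ‖f u - f v‖ ≤ ‖u - v‖) ∧
        G = {p : Euc m × Euc k | p.2 = f p.1}) := by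
  constructor
  · constructor
    · exact fun hmono => mono_to_graph G hG hmono
    · rintro ⟨D, f, hD, hf, rfl⟩ p hp q hq
      exact graph_mono hf p q hp.1 hp.2 hq.1 hq.2
  · constructor
    · rintro ⟨hmono, hmax⟩
      obtain ⟨D, f, hD, hf, hGeq⟩ := mono_to_graph G hG hmono
      have hDuniv : D = Set.univ := by
        by_contra hneq
        obtain ⟨u, hu⟩ := (Set.ne_univ_iff_exists_notMem D).mp hneq
        obtain ⟨v, hv⟩ := kir_point D f u hu hf
        set G' : Set (Euc m × Euc k) := insert (u, v) G with hG'
        have hmono' : ∀ p ∈ G', ∀ q ∈ G', 0 ≤ Lam (p - q) (p - q) := by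
          intro p hp q hq
          have hnew : ∀ q ∈ G, 0 ≤ Lam ((u, v) - q) ((u, v) - q) := by
            intro q hq
            rw [lam_eq]
            have hq' : q ∈ {p : Euc m × Euc k | p.1 ∈ D ∧ p.2 = f p.1} := hGeq ▸ hq
            have h1 := hv q.1 hq'.1
            rw [hq'.2] at *
            simp only
            nlinarith [hv q.1 hq'.1, norm_nonneg (u - q.1), norm_nonneg (v - f q.1)]
          have hswap : ∀ a b : Euc m × Euc k, Lam (a - b) (a - b) = Lam (b - a) (b - a) := by
            intro a b
            rw [lam_eq, lam_eq, norm_sub_rev a.1 b.1, norm_sub_rev a.2 b.2]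
          rcases hp with hp | hp <;> rcases hq with hq | hq
          · rw [hp, hq, lam_eq]; simp
          · rw [hp]; exact hnew q hq
          · rw [hq, hswap]; exact hnew p hp
          · exact hmono p hp q hq
        have heq := hmax G' hmono' (Set.subset_insert _ _)
        have hmem : (u, v) ∈ G := heq ▸ Set.mem_insert _ _
        rw [hGeq] at hmem
        exact hu hmem.1
      refine ⟨f, fun a b => hf a (hDuniv ▸ Set.mem_univ a) b (hDuniv ▸ Set.mem_univ b), ?_⟩
      rw [hGeq, hDuniv]
      ext p
      simp
    · rintro ⟨f, hf, rfl⟩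
      constructor
      · intro p hp q hq
        exact graph_mono (D := Set.univ) (fun a _ b _ => hf a b) p q trivial hp trivial hq
      · intro G' hmono' hsub
        refine Set.Subset.antisymm (fun p hp => ?_) hsub
        have hgr : (p.1, f p.1) ∈ G' := hsub rfl
        have h := hmono' p hp (p.1, f p.1) hgr
        rw [lam_eq] at h
        simp only [sub_self, norm_zero] at h
        have h2 : ‖p.2 - f p.1‖^2 ≤ 0 := by simpa using h
        have h3 : ‖p.2 - f p.1‖ = 0 := by nlinarith [norm_nonneg (p.2 - f p.1)]
        exact sub_eq_zero.mp (norm_eq_zero.mp h3)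


end
end
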